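/- arXiv:1902.06259 — 5 statements merged into one kernel-verified Lean document; each statement's English description precedes it below -/
import Mathlib

section
/- Let f_{α,β}(z) = 1 + ((β-α)/π) i log((1 - e^{2πi(1-α)/(β-α)} z)/(1-z)) with real α < 1 < β. Then for every z in the open unit disk, α < Re(f_{α,β}(z)) < β. -/
open Complex Metric

theorem stmt_2 (α β : ℝ) (hα : α < 1) (hβ : 1 < β) :
    ∀ z ∈ ball (0 : ℂ) 1,
      α < (1 + ((β - α) / Real.pi) * Complex.I *
        Complex.log ((1 - Complex.exp (2 * Real.pi * Complex.I * (1 - α) / (β - α)) * z) / (1 - z))).re ∧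
      (1 + ((β - α) / Real.pi) * Complex.I *
        Complex.log ((1 - Complex.exp (2 * Real.pi * Complex.I * (1 - α) / (β - α)) * z) / (1 - z))).re < β := by
  intro z hz
  rw [mem_ball, dist_zero_right] at hz
  have hπ : (0:ℝ) < Real.pi := Real.pi_pos
  have hba : (0:ℝ) < β - α := by linarith
  set t : ℝ := Real.pi * (1 - α) / (β - α) with htdef
  have h1α : (0:ℝ) < 1 - α := by linarith
  have ht0 : 0 < t := by rw [htdef]; positivity
  have htπ : t < Real.pi := by
    rw [htdef, div_lt_iff₀ hba]
    nlinarith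
  -- rewrite the exponent
  have hexp : (2 * (Real.pi:ℂ) * Complex.I * (1 - (α:ℂ)) / ((β:ℂ) - (α:ℂ)))
      = ((2*t : ℝ):ℂ) * Complex.I := by
    have hba' : ((β:ℂ) - (α:ℂ)) ≠ 0 := by exact_mod_cast hba.ne'
    field_simp [htdef]
    have ht' : (t:ℂ) * ((β:ℂ) - (α:ℂ)) = (Real.pi:ℂ) * (1 - (α:ℂ)) := by
      rw [htdef]; push_cast; exact div_mul_cancel₀ _ hba'
    push_cast
    linear_combination (-2:ℂ) * ht'
  set w : ℂ := (1 - Complex.exp (2 * Real.pi * Complex.I * (1 - α) / (β - α)) * z) / (1 - z) with hwdef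
  -- z ≠ 1
  have hz1 : (1:ℂ) - z ≠ 0 := by
    intro h
    have : z = 1 := by linear_combination -h
    rw [this] at hz
    simp at hz
  -- u = exp(-tI) * w
  set u : ℂ := Complex.exp (-(t:ℂ) * Complex.I) * w with hudef
  have hkey : Complex.exp (-(t:ℂ) * Complex.I) * Complex.exp (((2*t : ℝ):ℂ) * Complex.I)
      = Complex.exp ((t:ℂ) * Complex.I) := by
    rw [← Complex.exp_add]; congr 1; push_cast; ring
  have hu_eq : u = (Complex.exp (-(t:ℂ) * Complex.I) - Complex.exp ((t:ℂ) * Complex.I) * z) / (1 - z) := by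
    rw [hudef, hwdef, hexp, mul_div_assoc']
    congr 1
    rw [mul_sub, mul_one, ← mul_assoc, hkey]
  -- Im u < 0
  have hsin : 0 < Real.sin t := Real.sin_pos_of_pos_of_lt_pi ht0 htπ
  have hnz : 0 < Complex.normSq (1 - z) := Complex.normSq_pos.mpr hz1
  have hzn : z.re ^ 2 + z.im ^ 2 < 1 := by
    have := Complex.normSq_apply z
    have habs : ‖z‖ < 1 := hz
    have h2 : Complex.normSq z < 1 := by
      rw [← Complex.sq_norm]
      exact pow_lt_one₀ (norm_nonneg z) habs two_ne_zero
    nlinarith [this]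
  have hImu : u.im < 0 := by
    rw [hu_eq, Complex.div_im]
    have h1 : (Complex.exp (-(t:ℂ) * Complex.I) - Complex.exp ((t:ℂ) * Complex.I) * z).im
        * (1 - z).re - (Complex.exp (-(t:ℂ) * Complex.I) - Complex.exp ((t:ℂ) * Complex.I) * z).re
        * (1 - z).im = Real.sin t * (z.re ^ 2 + z.im ^ 2 - 1) := by
      simp [Complex.exp_mul_I, Complex.cos_ofReal_re, Complex.add_im, Complex.add_re,
        Complex.sub_re, Complex.sub_im, Complex.mul_re, Complex.mul_im, Complex.neg_re,
        Complex.neg_im, Complex.I_re, Complex.I_im, ← Complex.ofReal_neg, Real.cos_neg,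
        Real.sin_neg, Complex.sin_ofReal_re, Complex.sin_ofReal_im, Complex.cos_ofReal_im]
      ring
    have := mul_pos hsin (by linarith : (0:ℝ) < 1 - (z.re ^ 2 + z.im ^ 2))
    calc _ = (Real.sin t * (z.re ^ 2 + z.im ^ 2 - 1)) / Complex.normSq (1 - z) := by
              rw [← h1]; ring
      _ < 0 := by
          apply div_neg_of_neg_of_pos _ hnz
          nlinarith
  have hu0 : u ≠ 0 := fun h => by simp [h] at hImu
  -- arg u ∈ (-π, 0)
  have hargu0 : u.arg < 0 := Complex.arg_neg_iff.mpr hImu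
  have harguπ : -Real.pi < u.arg := Complex.neg_pi_lt_arg u
  -- w = exp(tI) * u
  have hwu : w = Complex.exp ((t:ℂ) * Complex.I) * u := by
    rw [hudef, ← mul_assoc, ← Complex.exp_add]
    norm_num
  have he0 : Complex.exp ((t:ℂ) * Complex.I) ≠ 0 := Complex.exp_ne_zero _
  have harge : (Complex.exp ((t:ℂ) * Complex.I)).arg = t := by
    rw [Complex.exp_mul_I]
    exact Complex.arg_cos_add_sin_mul_I ⟨by linarith, htπ.le⟩
  have hargw : w.arg = t + u.arg := by
    have h := Complex.arg_mul he0 hu0 (by rw [harge]; exact ⟨by linarith, by linarith⟩)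
    rw [hwu, h, harge]
  -- Re computation
  have hre : (1 + ((β:ℂ) - (α:ℂ)) / (Real.pi:ℂ) * Complex.I * Complex.log w).re
      = 1 - (β - α) / Real.pi * w.arg := by
    have : ((β:ℂ) - (α:ℂ)) / (Real.pi:ℂ) = (((β - α) / Real.pi : ℝ) : ℂ) := by push_cast; ring
    rw [this]
    simp [Complex.add_re, Complex.mul_re, Complex.mul_im, Complex.I_re, Complex.I_im,
      Complex.log_im]
    ring
  rw [hre]
  have hc : 0 < (β - α) / Real.pi := by positivity
  have hct : (β - α) / Real.pi * t = 1 - α := by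
    rw [htdef]; field_simp
  have hcπ : (β - α) / Real.pi * Real.pi = β - α := by field_simp
  constructor
  · have hlt : w.arg < t := by rw [hargw]; linarith
    nlinarith [mul_lt_mul_of_pos_left hlt hc]
  · have hgt : t - Real.pi < w.arg := by rw [hargw]; linarith
    nlinarith [mul_lt_mul_of_pos_left hgt hc]
end

section
/- Let 0 ≤ α, δ < 1 < β and suppose f(z) = z + Σ_{n≥2} a_n z^n and g(z) = z + Σ_{n≥2} b_n z^n are holomorphic on the unit disk with α < Re(z f'(z)/g(z)) < β for all z in the punctured disk (with the limit value 1 at 0), and |b_n| ≤ (1/(n-1)!) Π_{k=2}^n [k - 2 + (2(β-δ)/π) sin(π(1-δ)/(β-δ))] for all n ≥ 2. Then for all n ≥ 2: |a_n| ≤ (1/n!) Π_{k=2}^n [k-2 + (2(β-δ)/π) sin(π(1-δ)/(β-δ))] + (2(β-α)/(nπ)) sin(π(1-α)/(β-α)) · (1 + Σ_{j=1}^{n-2} (1/(n-j-1)!) Π_{k=2}^{n-j} [k-2 + (2(β-δ)/π) sin(π(1-δ)/(β-δ))]). -/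
open Complex Metric Finset FormalMultilinearSeries
open scoped NNReal ENNReal Real

lemma my_ofScalars_coeff (c : ℕ → ℂ) (n : ℕ) : (ofScalars ℂ c).coeff n = c n := by
  simp only [FormalMultilinearSeries.coeff, FormalMultilinearSeries.ofScalars,
    ContinuousMultilinearMap.smul_apply, ContinuousMultilinearMap.mkPiAlgebraFin_apply,
    smul_eq_mul]
  simp [show (1 : Fin n → ℂ) = fun _ => (1:ℂ) from rfl, List.ofFn_const]

lemma my_hasFPowerSeriesOnBall {h : ℂ → ℂ} {c : ℕ → ℂ}
    (hs : ∀ z ∈ ball (0:ℂ) 1, HasSum (fun k => c k * z ^ k) (h z)) :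
    HasFPowerSeriesOnBall h (ofScalars ℂ c) 0 1 := by
  constructor
  · refine ENNReal.le_of_forall_nnreal_lt (fun r hr => ?_)
    have hr1 : (r : ℝ) < 1 := by exact_mod_cast hr
    have hz : ((r : ℝ) : ℂ) ∈ ball (0:ℂ) 1 := by
      simp [_root_.abs_of_nonneg r.coe_nonneg, hr1]
    have := ((hs _ hz).summable).tendsto_atTop_zero.norm
    apply (ofScalars ℂ c).le_radius_of_tendsto (l := 0)
    simpa [norm_apply_eq_norm_coef, my_ofScalars_coeff, norm_mul, norm_pow,
      Complex.norm_real, _root_.abs_of_nonneg r.coe_nonneg] using this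
  · norm_num
  · intro y hy
    have hy' : y ∈ ball (0:ℂ) 1 := by
      rw [← ENNReal.coe_one, Metric.eball_coe] at hy; simpa using hy
    have := hs y hy'
    simpa [apply_eq_pow_smul_coeff, my_ofScalars_coeff, smul_eq_mul, mul_comm] using this

lemma my_exists_coeffs {h : ℂ → ℂ} (hd : DifferentiableOn ℂ h (ball 0 1)) :
    ∃ c : ℕ → ℂ, ∀ z ∈ ball (0:ℂ) 1, HasSum (fun k => c k * z ^ k) (h z) := by
  have hhalf : ((1/2 : ℝ≥0) : ℝ) < 1 := by norm_num
  have hq0 : HasFPowerSeriesOnBall h (cauchyPowerSeries h 0 (1/2 : ℝ≥0)) 0 (1/2 : ℝ≥0) :=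
    (hd.mono (closedBall_subset_ball (by norm_num))).hasFPowerSeriesOnBall (by norm_num)
  set q := cauchyPowerSeries h 0 ((1/2 : ℝ≥0) : ℝ) with hqdef
  refine ⟨q.coeff, fun z hz => ?_⟩
  have hz1 : ‖z‖ < 1 := by simpa [mem_ball, dist_eq_norm] using hz
  obtain ⟨r, hzr, hr1⟩ := exists_between hz1
  have hr0 : 0 ≤ r := le_trans (norm_nonneg z) hzr.le
  lift r to ℝ≥0 using hr0
  have hrpos : 0 < r := by
    have : (0:ℝ) ≤ ‖z‖ := norm_nonneg z
    exact_mod_cast lt_of_le_of_lt this hzr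
  have hqr : HasFPowerSeriesOnBall h (cauchyPowerSeries h 0 r) 0 r :=
    (hd.mono (closedBall_subset_ball (by exact_mod_cast hr1))).hasFPowerSeriesOnBall hrpos
  have heq : cauchyPowerSeries h 0 (r : ℝ) = q :=
    hqr.hasFPowerSeriesAt.eq_formalMultilinearSeries hq0.hasFPowerSeriesAt
  rw [heq] at hqr
  have hmem : z ∈ Metric.eball (0:ℂ) r := by
    rw [Metric.eball_coe]; simpa using hzr
  have := hqr.hasSum hmem
  simpa [apply_eq_pow_smul_coeff, smul_eq_mul, mul_comm] using this

lemma my_coeff_zero {h : ℂ → ℂ} {c : ℕ → ℂ}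
    (hs : ∀ z ∈ ball (0:ℂ) 1, HasSum (fun k => c k * z ^ k) (h z)) : c 0 = h 0 := by
  have h1 : HasSum (fun k => c k * (0:ℂ) ^ k) (c 0) := by
    have := hasSum_single (f := fun k => c k * (0:ℂ) ^ k) 0 (by intro b hb; simp [zero_pow hb])
    simpa using this
  exact h1.unique (hs 0 (by simp))

lemma my_deriv_zero {h : ℂ → ℂ} {c : ℕ → ℂ}
    (hs : ∀ z ∈ ball (0:ℂ) 1, HasSum (fun k => c k * z ^ k) (h z)) : deriv h 0 = c 1 := by
  have := (my_hasFPowerSeriesOnBall hs).hasFPowerSeriesAt.deriv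
  rw [this]
  exact my_ofScalars_coeff c 1

lemma strip_deriv_bound (α β : ℝ) (hα1 : α < 1) (hβ : 1 < β) {G : ℂ → ℂ}
    (hd : DifferentiableOn ℂ G (ball 0 1)) (hG0 : G 0 = 1)
    (hs : ∀ z ∈ ball (0:ℂ) 1, α < (G z).re ∧ (G z).re < β) :
    ‖deriv G 0‖ ≤ 2 * (β - α) / Real.pi * Real.sin (Real.pi * (1 - α) / (β - α)) := by
  have hβα : 0 < β - α := by linarith
  set θ : ℝ := Real.pi * (1 - α) / (β - α) with hθdef
  set r : ℝ := Real.pi / (β - α) with hrdef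
  have hrpos : 0 < r := div_pos Real.pi_pos hβα
  have hθ0 : 0 < θ := div_pos (by nlinarith [Real.pi_pos]) hβα
  have hθπ : θ < Real.pi := by
    rw [hθdef, div_lt_iff₀ hβα]
    nlinarith [Real.pi_pos]
  have hθr : θ = r * (1 - α) := by rw [hθdef, hrdef]; ring
  have hsinθ : 0 < Real.sin θ := Real.sin_pos_of_pos_of_lt_pi hθ0 hθπ
  set s : ℂ → ℂ := fun w => Complex.exp (↑r * ((w - ↑α) * I)) with hsdef
  set ζ₀ : ℂ := Complex.exp (↑θ * I) with hζ₀
  set ζ₁ : ℂ := Complex.exp (↑(-θ) * I) with hζ₁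
  have himu : ∀ w : ℂ, ((r:ℂ) * ((w - ↑α) * I)).im = r * (w.re - α) := by
    intro w
    simp [Complex.mul_im, Complex.ofReal_re, Complex.ofReal_im, Complex.mul_I_im,
      Complex.mul_I_re, Complex.sub_re]
  have him : ∀ w : ℂ, α < w.re → w.re < β → 0 < (s w).im := by
    intro w h1 h2
    rw [hsdef]
    simp only [Complex.exp_im, himu]
    apply mul_pos (Real.exp_pos _)
    apply Real.sin_pos_of_pos_of_lt_pi
    · exact mul_pos hrpos (by linarith)
    · rw [hrdef, div_mul_eq_mul_div, div_lt_iff₀ hβα]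
      nlinarith [Real.pi_pos]
  have hs1 : s 1 = ζ₀ := by
    have e : (r:ℂ) * (((1:ℂ) - ↑α) * I) = ↑θ * I := by rw [hθr]; push_cast; ring
    rw [hsdef, hζ₀]
    exact congrArg Complex.exp e
  have hζ₀re : ζ₀.re = Real.cos θ := Complex.exp_ofReal_mul_I_re θ
  have hζ₀im : ζ₀.im = Real.sin θ := Complex.exp_ofReal_mul_I_im θ
  have hζ₁re : ζ₁.re = Real.cos θ := by
    rw [hζ₁, Complex.exp_ofReal_mul_I_re, Real.cos_neg]
  have hζ₁im : ζ₁.im = -Real.sin θ := by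
    rw [hζ₁, Complex.exp_ofReal_mul_I_im, Real.sin_neg]
  have hden : ∀ x : ℂ, 0 < x.im → x - ζ₁ ≠ 0 := by
    intro x hx h0
    have h1 : (x - ζ₁).im = 0 := by rw [h0]; simp
    rw [Complex.sub_im, hζ₁im] at h1
    nlinarith
  set Ψ : ℂ → ℂ := fun w => (s w - ζ₀) / (s w - ζ₁) with hΨdef
  have habs : ∀ x : ℂ, 0 < x.im → ‖(x - ζ₀)/(x - ζ₁)‖ < 1 := by
    intro x hx
    rw [norm_div, div_lt_one (by
      have := hden x hx
      simpa using this)]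
    have h2 : Complex.normSq (x - ζ₀) < Complex.normSq (x - ζ₁) := by
      simp only [Complex.normSq_apply, Complex.sub_re, Complex.sub_im, hζ₀re, hζ₀im, hζ₁re, hζ₁im]
      nlinarith
    have h3 := Real.sqrt_lt_sqrt (Complex.normSq_nonneg _) h2
    simpa [Complex.norm_def] using h3
  have hsdiff : Differentiable ℂ s := by
    apply Differentiable.cexp
    apply Differentiable.const_mul
    exact (differentiable_id.sub_const _).mul_const I
  set F : ℂ → ℂ := Ψ ∘ G with hFdef
  have hGim : ∀ z ∈ ball (0:ℂ) 1, 0 < (s (G z)).im := fun z hz =>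
    him (G z) (hs z hz).1 (hs z hz).2
  have hFd : DifferentiableOn ℂ F (ball 0 1) := by
    apply DifferentiableOn.div
    · exact ((hsdiff.comp_differentiableOn hd).sub_const ζ₀)
    · exact ((hsdiff.comp_differentiableOn hd).sub_const ζ₁)
    · intro z hz
      exact hden _ (hGim z hz)
  have hF0 : F 0 = 0 := by
    simp only [hFdef, Function.comp_apply, hG0, hΨdef, hs1]
    simp
  have hmaps : Set.MapsTo F (ball (0:ℂ) 1) (ball (F 0) 1) := by
    intro z hz
    rw [hF0, mem_ball_zero_iff]
    exact habs _ (hGim z hz)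
  have hschwarz : ‖deriv F 0‖ ≤ 1 := by
    have := Complex.norm_deriv_le_div_of_mapsTo_ball hFd (hmaps.mono_right ball_subset_closedBall) one_pos
    simpa using this
  have hsd1 : HasDerivAt s (ζ₀ * (↑r * I)) 1 := by
    have h1 : HasDerivAt (fun w : ℂ => ↑r * ((w - ↑α) * I)) (↑r * I) 1 := by
      have := (((hasDerivAt_id (1:ℂ)).sub_const (↑α : ℂ)).mul_const I).const_mul (↑r : ℂ)
      simpa using this
    have h2 := h1.cexp
    rw [show Complex.exp (↑r * (((1:ℂ) - ↑α) * I)) = ζ₀ from hs1] at h2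
    exact h2
  have hζζ : ζ₀ - ζ₁ = ((2 * Real.sin θ : ℝ) : ℂ) * I := by
    apply Complex.ext <;>
      simp [Complex.sub_re, Complex.sub_im, hζ₀re, hζ₀im, hζ₁re, hζ₁im,
        Complex.sin_ofReal_re] <;> ring
  have hζζne : ζ₀ - ζ₁ ≠ 0 := by
    rw [hζζ]
    simp only [ne_eq, mul_eq_zero, Complex.I_ne_zero, or_false]
    exact_mod_cast (by positivity : (2 * Real.sin θ : ℝ) ≠ 0)
  have hΨd1 : HasDerivAt Ψ (ζ₀ * (↑r * I) / (ζ₀ - ζ₁)) 1 := by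
    have hnum : HasDerivAt (fun w => s w - ζ₀) (ζ₀ * (↑r * I)) 1 := hsd1.sub_const _
    have hden' : HasDerivAt (fun w => s w - ζ₁) (ζ₀ * (↑r * I)) 1 := hsd1.sub_const _
    have h3 := hnum.div hden' (by rw [hs1]; exact hζζne)
    rw [hs1] at h3
    rw [show ζ₀ * (↑r * I) / (ζ₀ - ζ₁) = (ζ₀ * (↑r * I) * (ζ₀ - ζ₁) - (ζ₀ - ζ₀) * (ζ₀ * (↑r * I))) / (ζ₀ - ζ₁) ^ 2 from by
      rw [sub_self, zero_mul, sub_zero, div_eq_div_iff hζζne (pow_ne_zero 2 hζζne)]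
      ring]
    exact h3
  have hG0diff : DifferentiableAt ℂ G 0 := hd.differentiableAt (isOpen_ball.mem_nhds (by simp))
  have hΨdiffAt : DifferentiableAt ℂ Ψ (G 0) := by rw [hG0]; exact hΨd1.differentiableAt
  have hcomp : deriv F 0 = deriv Ψ (G 0) * deriv G 0 := deriv_comp (x := 0) hΨdiffAt hG0diff
  have hΨval : ‖deriv Ψ 1‖ = r / (2 * Real.sin θ) := by
    rw [hΨd1.deriv, hζζ, hζ₀]
    simp only [norm_div, norm_mul, Complex.norm_exp, Complex.norm_I, Complex.norm_real, Real.norm_eq_abs]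
    have e1 : ((θ:ℂ) * I).re = 0 := by simp
    rw [e1, Real.exp_zero, _root_.abs_of_pos hrpos,
      abs_two, _root_.abs_of_pos hsinθ]
    ring
  have h1 : ‖deriv F 0‖ = ‖deriv Ψ 1‖ * ‖deriv G 0‖ := by
    rw [hcomp, hG0, norm_mul]
  have h2 : ‖deriv G 0‖ ≤ 2 * Real.sin θ / r := by
    rw [h1, hΨval] at hschwarz
    rw [le_div_iff₀ hrpos]
    rw [div_mul_eq_mul_div, div_le_one (by positivity)] at hschwarz
    linarith [hschwarz]
  calc ‖deriv G 0‖ ≤ 2 * Real.sin θ / r := h2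
    _ = 2 * (β - α) / Real.pi * Real.sin θ := by
        rw [hrdef]
        field_simp

-- summability of norms inside the ball
lemma my_summable_norm {h : ℂ → ℂ} {c : ℕ → ℂ}
    (hs : ∀ z ∈ ball (0:ℂ) 1, HasSum (fun k => c k * z ^ k) (h z))
    {t : ℝ} (ht0 : 0 ≤ t) (ht1 : t < 1) :
    Summable (fun k => ‖c k‖ * t ^ k) := by
  have hp := my_hasFPowerSeriesOnBall hs
  have hrad : (t.toNNReal : ℝ≥0∞) < (ofScalars ℂ c).radius := by
    apply lt_of_lt_of_le _ hp.r_le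
    rw [← ENNReal.coe_one, ENNReal.coe_lt_coe]
    rw [← NNReal.coe_lt_coe]
    simpa [Real.coe_toNNReal _ ht0] using ht1
  have := (ofScalars ℂ c).summable_norm_mul_pow hrad
  simp only [norm_apply_eq_norm_coef, my_ofScalars_coeff] at this
  simpa [Real.coe_toNNReal _ ht0] using this

lemma coeff_bound (α β : ℝ) (hα1 : α < 1) (hβ : 1 < β) {h : ℂ → ℂ} {c : ℕ → ℂ}
    (hsum : ∀ z ∈ ball (0:ℂ) 1, HasSum (fun k => c k * z ^ k) (h z))
    (h0 : h 0 = 1)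
    (hstrip : ∀ z ∈ ball (0:ℂ) 1, α < (h z).re ∧ (h z).re < β) :
    ∀ m : ℕ, 1 ≤ m → ‖c m‖ ≤
      2 * (β - α) / Real.pi * Real.sin (Real.pi * (1 - α) / (β - α)) := by
  intro m hm
  have hm0 : m ≠ 0 := by omega
  set cm : ℕ → ℂ := fun k => c (m * k) with hcm
  set Gm : ℂ → ℂ := fun w => ∑' k, cm k * w ^ k with hGm
  -- summability and HasSum for Gm
  have hkey : ∀ w ∈ ball (0:ℂ) 1, HasSum (fun k => cm k * w ^ k) (Gm w) := by
    intro w hw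
    have hw1 : ‖w‖ < 1 := by simpa [mem_ball, dist_eq_norm] using hw
    obtain ⟨u, hwu, hu1⟩ := exists_between hw1
    have hu0 : 0 < u := lt_of_le_of_lt (norm_nonneg w) hwu
    set t : ℝ := u ^ ((1:ℝ)/m) with htdef
    have ht0 : 0 ≤ t := Real.rpow_nonneg hu0.le _
    have ht1 : t < 1 := by
      rw [htdef]
      apply Real.rpow_lt_one hu0.le hu1
      positivity
    have htm : t ^ m = u := by
      rw [htdef, ← Real.rpow_natCast (u ^ ((1:ℝ)/m)) m, ← Real.rpow_mul hu0.le]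
      rw [one_div, inv_mul_cancel₀ (by exact_mod_cast hm0 : (m:ℝ) ≠ 0), Real.rpow_one]
    have hsum2 := (my_summable_norm hsum ht0 ht1).comp_injective
      (mul_right_injective₀ hm0)
    have hle : ∀ k, ‖cm k * w ^ k‖ ≤ ‖c (m*k)‖ * t ^ (m*k) := by
      intro k
      rw [norm_mul, norm_pow]
      apply mul_le_mul_of_nonneg_left _ (norm_nonneg _)
      calc ‖w‖ ^ k ≤ u ^ k := pow_le_pow_left₀ (norm_nonneg w) hwu.le k
        _ = t ^ (m*k) := by rw [pow_mul, htm]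
    have hsummable : Summable (fun k => cm k * w ^ k) := by
      apply Summable.of_norm
      apply Summable.of_nonneg_of_le (fun k => norm_nonneg _) (fun k => hle k)
      exact hsum2
    exact hsummable.hasSum
  have hc0 : c 0 = 1 := by rw [my_coeff_zero hsum, h0]
  have hGm0 : Gm 0 = 1 := by
    have h1 := my_coeff_zero hkey
    have h2 : cm 0 = c 0 := by simp [hcm]
    rw [← h1, h2, hc0]
  have hGmstrip : ∀ w ∈ ball (0:ℂ) 1, α < (Gm w).re ∧ (Gm w).re < β := by
    intro w hw
    rcases eq_or_ne w 0 with rfl | hw0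
    · rw [hGm0]
      norm_num [hα1, hβ]
    · obtain ⟨z, hzm⟩ := IsAlgClosed.exists_pow_nat_eq w (by omega : 0 < m)
      have hzball : z ∈ ball (0:ℂ) 1 := by
        rw [mem_ball_zero_iff]
        by_contra hcon
        push_neg at hcon
        have h1 : (1:ℝ) ≤ ‖z‖ ^ m := one_le_pow₀ hcon
        rw [← norm_pow, hzm] at h1
        have : ‖w‖ < 1 := by simpa [mem_ball, dist_eq_norm] using hw
        linarith
      have hz1 : ‖z‖ < 1 := by simpa [mem_ball_zero_iff] using hzball
      set ε : ℂ := Complex.exp (2 * ↑Real.pi * I / (m:ℂ)) with hε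
      have hprim : IsPrimitiveRoot ε m := Complex.isPrimitiveRoot_exp m hm0
      have hεabs : ‖ε‖ = 1 := by
        rw [hε, Complex.norm_exp]
        have : (2 * ↑Real.pi * I / (m:ℂ)).re = 0 := by
          simp [Complex.div_re, Complex.mul_re, Complex.mul_im]
        rw [this, Real.exp_zero]
      have hmemj : ∀ j : ℕ, (ε ^ j * z) ∈ ball (0:ℂ) 1 := by
        intro j
        rw [mem_ball_zero_iff, norm_mul, norm_pow]
        rw [hεabs, one_pow, one_mul]
        exact hz1
      have h_tot : HasSum (fun k => ∑ j ∈ range m, c k * (ε^j * z)^k)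
          (∑ j ∈ range m, h (ε^j * z)) :=
        hasSum_sum (fun j _ => hsum _ (hmemj j))
      have inner : ∀ k, ∑ j ∈ range m, c k * (ε^j * z)^k
          = if m ∣ k then (m:ℂ) * (c k * z^k) else 0 := by
        intro k
        have hterm : ∀ j, c k * (ε ^ j * z) ^ k = (ε^k)^j * (c k * z^k) := by
          intro j
          rw [mul_pow, ← pow_mul, mul_comm j k, pow_mul]
          ring
        rw [Finset.sum_congr rfl (fun j _ => hterm j), ← Finset.sum_mul]
        by_cases hdvd : m ∣ k
        · rw [if_pos hdvd]
          have he1 : ε ^ k = 1 := (hprim.pow_eq_one_iff_dvd k).mpr hdvd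
          simp [he1]
        · rw [if_neg hdvd]
          have hne : ε ^ k ≠ 1 := fun hc => hdvd ((hprim.pow_eq_one_iff_dvd k).mp hc)
          rw [geom_sum_eq hne]
          have hem : (ε ^ k) ^ m = 1 := by
            rw [← pow_mul, mul_comm, pow_mul, hprim.pow_eq_one, one_pow]
          rw [hem]
          simp
      have h_tot2 : HasSum (fun k => if m ∣ k then (m:ℂ) * (c k * z ^ k) else 0)
          ((m:ℂ) * Gm w) := by
        have base := (hkey w hw).mul_left (m:ℂ)
        have hinj : Function.Injective (fun k : ℕ => m * k) := mul_right_injective₀ hm0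
        have hzero : ∀ k ∉ Set.range (fun k : ℕ => m * k),
            (if m ∣ k then (m:ℂ) * (c k * z ^ k) else 0) = 0 := by
          intro k hk
          rw [if_neg]
          rintro ⟨j, hj⟩
          exact hk ⟨j, hj.symm⟩
        have hcomp : ((fun k => if m ∣ k then (m:ℂ) * (c k * z ^ k) else 0)
            ∘ (fun k : ℕ => m * k)) = fun k => (m:ℂ) * (cm k * w ^ k) := by
          funext k
          simp only [Function.comp_apply]
          rw [if_pos ⟨k, rfl⟩, ← hzm, ← pow_mul]
        exact (hinj.hasSum_iff hzero).mp (hcomp ▸ base)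
      have hSeq : (∑ j ∈ range m, h (ε^j * z)) = (m:ℂ) * Gm w := by
        have h_tot' : HasSum (fun k => if m ∣ k then (m:ℂ) * (c k * z ^ k) else 0)
            (∑ j ∈ range m, h (ε^j * z)) := by
          have := funext inner
          rwa [this] at h_tot
        exact h_tot'.unique h_tot2
      have hre : (m:ℝ) * (Gm w).re = ∑ j ∈ range m, (h (ε^j * z)).re := by
        have h3 := congrArg Complex.re hSeq
        rw [Complex.re_sum] at h3
        rw [h3]
        simp [Complex.mul_re]
      have hmpos : (0:ℝ) < m := by exact_mod_cast (by omega : 0 < m)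
      have hne : (range m).Nonempty := ⟨0, Finset.mem_range.mpr (by omega)⟩
      constructor
      · have hlt : (m:ℝ) * α < (m:ℝ) * (Gm w).re := by
          rw [hre]
          calc (m:ℝ) * α = ∑ _j ∈ range m, α := by simp [mul_comm]
            _ < _ := Finset.sum_lt_sum_of_nonempty hne (fun j _ => (hstrip _ (hmemj j)).1)
        exact (mul_lt_mul_iff_right₀ hmpos).mp hlt
      · have hlt : (m:ℝ) * (Gm w).re < (m:ℝ) * β := by
          rw [hre]
          calc ∑ j ∈ range m, (h (ε^j * z)).re
              < ∑ _j ∈ range m, β :=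
                Finset.sum_lt_sum_of_nonempty hne (fun j _ => (hstrip _ (hmemj j)).2)
            _ = (m:ℝ) * β := by simp [mul_comm]
        exact (mul_lt_mul_iff_right₀ hmpos).mp hlt
  have hGmdiff : DifferentiableOn ℂ Gm (ball 0 1) := by
    apply ((my_hasFPowerSeriesOnBall hkey).differentiableOn).mono
    intro x hx
    rw [mem_ball_zero_iff] at hx
    rw [← ENNReal.coe_one, Metric.eball_coe]; simpa using hx
  have hfinal := strip_deriv_bound α β hα1 hβ hGmdiff hGm0 hGmstrip
  have hder : deriv Gm 0 = c m := by
    rw [my_deriv_zero hkey]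
    show cm 1 = c m
    rw [hcm]
    norm_num
  rw [← hder]
  exact hfinal

lemma my_ball_sub_eball : ball (0:ℂ) 1 ⊆ Metric.eball (0:ℂ) 1 := by
  intro x hx
  rw [mem_ball_zero_iff] at hx
  rw [← ENNReal.coe_one, Metric.eball_coe]; simpa using hx

lemma my_deriv_hasSum {f : ℂ → ℂ} {a : ℕ → ℂ}
    (hfs : ∀ z ∈ ball (0:ℂ) 1, HasSum (fun n => a n * z ^ n) (f z)) :
    ∀ z ∈ ball (0:ℂ) 1, HasSum (fun n : ℕ => ((n:ℂ) * a n) * z ^ n) (z * deriv f z) := by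
  intro z hz
  have hpf := my_hasFPowerSeriesOnBall hfs
  have hz' : z ∈ Metric.eball (0:ℂ) 1 := my_ball_sub_eball hz
  have h1 := hpf.fderiv.hasSum hz'
  have h2 := h1.mapL (ContinuousLinearMap.apply ℂ ℂ z)
  simp only [ContinuousLinearMap.apply_apply, zero_add] at h2
  have hterm : ∀ n : ℕ, ((ofScalars ℂ a).derivSeries n (fun _ => z)) z
      = (((n:ℕ)+1 : ℕ):ℂ) * a (n+1) * z ^ (n+1) := by
    intro n
    rw [FormalMultilinearSeries.derivSeries_apply_diag]
    rw [apply_eq_pow_smul_coeff, my_ofScalars_coeff]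
    rw [nsmul_eq_mul, smul_eq_mul]
    push_cast
    ring
  have h3 : fderiv ℂ f z z = z * deriv f z := by
    have h5 := (fderiv ℂ f z).map_smul z (1:ℂ)
    simpa [smul_eq_mul, fderiv_apply_one_eq_deriv] using h5
  rw [funext hterm, h3] at h2
  have h4 : ∀ x ∉ Set.range Nat.succ, ((x:ℂ) * a x) * z ^ x = 0 := by
    intro x hx
    have : x = 0 := by
      rcases Nat.eq_zero_or_pos x with h | h
      · exact h
      · exact absurd ⟨x - 1, by omega⟩ hx
    simp [this]
  refine (Function.Injective.hasSum_iff Nat.succ_injective h4).mp ?_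
  exact h2

lemma my_cauchy {h g : ℂ → ℂ} {c b : ℕ → ℂ}
    (hc : ∀ z ∈ ball (0:ℂ) 1, HasSum (fun k => c k * z ^ k) (h z))
    (hb : ∀ z ∈ ball (0:ℂ) 1, HasSum (fun k => b k * z ^ k) (g z)) :
    ∀ z ∈ ball (0:ℂ) 1,
      HasSum (fun n => (∑ k ∈ range (n+1), c k * b (n-k)) * z ^ n) (h z * g z) := by
  intro z hz
  have hz1 : ‖z‖ < 1 := by simpa [mem_ball, dist_eq_norm] using hz
  have hz0 : (0:ℝ) ≤ ‖z‖ := norm_nonneg z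
  have hsc : Summable (fun k => ‖c k * z ^ k‖) := by
    have := my_summable_norm hc hz0 hz1
    simpa [norm_mul, norm_pow] using this
  have hsb : Summable (fun k => ‖b k * z ^ k‖) := by
    have := my_summable_norm hb hz0 hz1
    simpa [norm_mul, norm_pow] using this
  have hprod := hasSum_sum_range_mul_of_summable_norm hsc hsb
  rw [(hc z hz).tsum_eq, (hb z hz).tsum_eq] at hprod
  suffices e : (fun n => (∑ k ∈ range (n+1), c k * b (n-k)) * z ^ n) = (fun n => ∑ k ∈ range (n + 1), c k * z ^ k * (b (n - k) * z ^ (n - k))) by rw [e]; exact hprod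
  funext n
  rw [Finset.sum_mul]
  apply Finset.sum_congr rfl
  intro k hk
  have hkn : k ≤ n := by
    rw [Finset.mem_range] at hk
    omega
  have : z ^ k * z ^ (n - k) = z ^ n := by
    rw [← pow_add]
    congr 1
    omega
  calc c k * b (n-k) * z ^ n = c k * b (n - k) * (z ^ k * z ^ (n-k)) := by rw [this]
    _ = c k * z ^ k * (b (n-k) * z ^ (n-k)) := by ring

theorem stmt_5 (α β δ : ℝ) (hα : 0 ≤ α) (hα1 : α < 1) (hδ : 0 ≤ δ) (hδ1 : δ < 1) (hβ : 1 < β)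
    (f g : ℂ → ℂ) (a b : ℕ → ℂ)
    (hfs : ∀ z ∈ ball (0 : ℂ) 1, HasSum (fun n : ℕ => a n * z ^ n) (f z))
    (ha0 : a 0 = 0) (ha1 : a 1 = 1)
    (hgs : ∀ z ∈ ball (0 : ℂ) 1, HasSum (fun n : ℕ => b n * z ^ n) (g z))
    (hb0 : b 0 = 0) (hb1 : b 1 = 1)
    (hstrip : ∀ z ∈ ball (0 : ℂ) 1, z ≠ 0 →
      α < (z * deriv f z / g z).re ∧ (z * deriv f z / g z).re < β)
    (hbn : ∀ n : ℕ, 2 ≤ n → ‖b n‖ ≤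
      (∏ k ∈ Finset.Icc 2 n,
        ((k : ℝ) - 2 + (2 * (β - δ) / Real.pi) * Real.sin (Real.pi * (1 - δ) / (β - δ)))) /
        (Nat.factorial (n - 1))) :
    ∀ n : ℕ, 2 ≤ n → ‖a n‖ ≤
      (∏ k ∈ Finset.Icc 2 n,
        ((k : ℝ) - 2 + (2 * (β - δ) / Real.pi) * Real.sin (Real.pi * (1 - δ) / (β - δ)))) /
        (Nat.factorial n) +
      (2 * (β - α) / (n * Real.pi)) * Real.sin (Real.pi * (1 - α) / (β - α)) *
        (1 + ∑ j ∈ Finset.Icc 1 (n - 2),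
          (∏ k ∈ Finset.Icc 2 (n - j),
            ((k : ℝ) - 2 + (2 * (β - δ) / Real.pi) * Real.sin (Real.pi * (1 - δ) / (β - δ)))) /
            (Nat.factorial (n - j - 1))) := by
  have hg0 : g 0 = 0 := by rw [← my_coeff_zero hgs, hb0]
  set G : ℂ → ℂ := fun z => if z = 0 then 1 else g z / z with hGdef
  have hG0 : G 0 = 1 := by simp [hGdef]
  have hGsum : ∀ z ∈ ball (0:ℂ) 1, HasSum (fun k : ℕ => b (k+1) * z ^ k) (G z) := by
    intro z hz
    rcases eq_or_ne z 0 with rfl | hz0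
    · have h1 : HasSum (fun k : ℕ => b (k+1) * (0:ℂ) ^ k) (b 1) := by
        have := hasSum_single (f := fun k : ℕ => b (k+1) * (0:ℂ) ^ k) 0
          (by intro k hk; simp [zero_pow hk])
        simpa using this
      simpa [hG0, hb1] using h1
    · have h1 := hgs z hz
      have h2 : ∀ x ∉ Set.range Nat.succ, b x * z ^ x = 0 := by
        intro x hx
        have hx0 : x = 0 := by
          rcases Nat.eq_zero_or_pos x with h | h
          · exact h
          · exact absurd ⟨x - 1, by omega⟩ hx
        simp [hx0, hb0]
      have h3 := (Function.Injective.hasSum_iff Nat.succ_injective h2).mpr h1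
      have h4 := h3.mul_left z⁻¹
      have h5 : (fun k : ℕ => z⁻¹ * (b (Nat.succ k) * z ^ (Nat.succ k)))
          = fun k : ℕ => b (k+1) * z ^ k := by
        funext k
        rw [pow_succ]
        field_simp
      rw [show (fun k : ℕ => z⁻¹ * ((fun x => b x * z ^ x) ∘ Nat.succ) k)
          = fun k : ℕ => z⁻¹ * (b (Nat.succ k) * z ^ (Nat.succ k)) from rfl, h5] at h4
      have hGz : G z = z⁻¹ * g z := by
        rw [hGdef]
        simp only [if_neg hz0]
        rw [div_eq_inv_mul]
      rw [← hGz] at h4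
      exact h4
  have hGzg : ∀ z ∈ ball (0:ℂ) 1, g z = z * G z := by
    intro z hz
    rcases eq_or_ne z 0 with rfl | hz0
    · simp [hg0]
    · rw [hGdef]
      simp only [if_neg hz0]
      rw [mul_comm, div_mul_cancel₀ _ hz0]
  have hGne : ∀ z ∈ ball (0:ℂ) 1, G z ≠ 0 := by
    intro z hz
    rcases eq_or_ne z 0 with rfl | hz0
    · rw [hG0]; exact one_ne_zero
    · intro hzero
      have hgz : g z = 0 := by rw [hGzg z hz, hzero, mul_zero]
      have h6 := (hstrip z hz hz0).1
      rw [hgz, div_zero] at h6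
      simp only [Complex.zero_re] at h6
      linarith
  have hGdiff : DifferentiableOn ℂ G (ball 0 1) :=
    ((my_hasFPowerSeriesOnBall hGsum).differentiableOn).mono my_ball_sub_eball
  have hpf := my_hasFPowerSeriesOnBall hfs
  have hfdiffOn : DifferentiableOn ℂ (fderiv ℂ f) (ball 0 1) :=
    (hpf.fderiv.differentiableOn).mono my_ball_sub_eball
  have hderivdiff : DifferentiableOn ℂ (deriv f) (ball 0 1) := by
    apply DifferentiableOn.congr (f := fun z => fderiv ℂ f z 1)
    · exact hfdiffOn.clm_apply (differentiableOn_const 1)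
    · intro z _
      exact fderiv_apply_one_eq_deriv.symm
  set h : ℂ → ℂ := fun z => deriv f z / G z with hhdef
  have hhdiff : DifferentiableOn ℂ h (ball 0 1) :=
    hderivdiff.div hGdiff hGne
  have hderivf0 : deriv f 0 = 1 := by rw [my_deriv_zero hfs, ha1]
  have hh0 : h 0 = 1 := by
    rw [hhdef]
    simp only [hG0, hderivf0, div_one]
  have hhstrip : ∀ z ∈ ball (0:ℂ) 1, α < (h z).re ∧ (h z).re < β := by
    intro z hz
    rcases eq_or_ne z 0 with rfl | hz0
    · rw [hh0]
      simpa using ⟨hα1, hβ⟩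
    · have heq : h z = z * deriv f z / g z := by
        rw [hGzg z hz, mul_div_mul_left _ _ hz0]
      rw [heq]
      exact hstrip z hz hz0
  obtain ⟨c, hc⟩ := my_exists_coeffs hhdiff
  have hc0 : c 0 = 1 := by rw [my_coeff_zero hc, hh0]
  have hcb := coeff_bound α β hα1 hβ hc hh0 hhstrip
  have hmul : ∀ z ∈ ball (0:ℂ) 1, h z * g z = z * deriv f z := by
    intro z hz
    rw [hGzg z hz, hhdef]
    field_simp [hGne z hz]
  have hAconv : ∀ n : ℕ, (n:ℂ) * a n = ∑ k ∈ range (n+1), c k * b (n-k) := by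
    have h1 : ∀ z ∈ ball (0:ℂ) 1,
        HasSum (fun n => (∑ k ∈ range (n+1), c k * b (n-k)) * z ^ n) (z * deriv f z) := by
      intro z hz
      have h7 := my_cauchy hc hgs z hz
      rwa [hmul z hz] at h7
    have hA := my_hasFPowerSeriesOnBall (my_deriv_hasSum hfs)
    have hB := my_hasFPowerSeriesOnBall h1
    have heq := hA.hasFPowerSeriesAt.eq_formalMultilinearSeries hB.hasFPowerSeriesAt
    intro n
    have h8 := congrArg (fun p => FormalMultilinearSeries.coeff p n) heq
    simpa [my_ofScalars_coeff] using h8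
  -- numerics
  intro n hn
  have hβα : 0 < β - α := by linarith
  have hθ0 : 0 < Real.pi * (1 - α) / (β - α) := div_pos (by nlinarith [Real.pi_pos]) hβα
  have hθπ : Real.pi * (1 - α) / (β - α) < Real.pi := by
    rw [div_lt_iff₀ hβα]
    nlinarith [Real.pi_pos]
  have hB1pos : 0 < 2 * (β - α) / Real.pi * Real.sin (Real.pi * (1 - α) / (β - α)) := by
    apply mul_pos (by positivity)
    exact Real.sin_pos_of_pos_of_lt_pi hθ0 hθπ
  set B1 : ℝ := 2 * (β - α) / Real.pi * Real.sin (Real.pi * (1 - α) / (β - α)) with hB1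
  set P : ℕ → ℝ := fun m => ∏ k ∈ Finset.Icc 2 m,
    ((k : ℝ) - 2 + (2 * (β - δ) / Real.pi) * Real.sin (Real.pi * (1 - δ) / (β - δ))) with hP
  have hsplit : range (n+1) = insert 0 (insert (n-1) (insert n (Finset.Icc 1 (n-2)))) := by
    ext j
    simp only [Finset.mem_range, Finset.mem_insert, Finset.mem_Icc]
    omega
  have h0notin : (0:ℕ) ∉ insert (n-1) (insert n (Finset.Icc 1 (n-2))) := by
    simp only [Finset.mem_insert, Finset.mem_Icc]
    omega
  have hn1notin : (n-1) ∉ insert n (Finset.Icc 1 (n-2)) := by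
    simp only [Finset.mem_insert, Finset.mem_Icc]
    omega
  have hnnotin : n ∉ Finset.Icc 1 (n-2) := by
    simp only [Finset.mem_Icc]
    omega
  have hsum_eq : ∑ k ∈ range (n+1), ‖c k * b (n-k)‖
      = ‖b n‖ + ‖c (n-1)‖
        + ∑ k ∈ Finset.Icc 1 (n-2), ‖c k * b (n-k)‖ := by
    rw [hsplit, Finset.sum_insert h0notin, Finset.sum_insert hn1notin,
      Finset.sum_insert hnnotin]
    rw [show n - (n-1) = 1 by omega, show n - n = 0 by omega, show n - 0 = n by omega]
    rw [hc0, hb0, hb1]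
    simp only [norm_mul, norm_one, one_mul, mul_one, norm_zero, mul_zero]
    ring
  have hterm_bound : ∀ k ∈ Finset.Icc 1 (n-2),
      ‖c k * b (n-k)‖ ≤ B1 * (P (n-k) / (Nat.factorial (n-k-1))) := by
    intro k hk
    rw [Finset.mem_Icc] at hk
    rw [norm_mul]
    apply mul_le_mul (hcb k (by omega)) (hbn (n-k) (by omega)) (norm_nonneg _) hB1pos.le
  have hbound : ‖(n:ℂ) * a n‖ ≤ P n / (Nat.factorial (n-1))
      + B1 * (1 + ∑ k ∈ Finset.Icc 1 (n-2), P (n-k) / (Nat.factorial (n-k-1))) := by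
    rw [hAconv n]
    calc ‖∑ k ∈ range (n+1), c k * b (n-k)‖
        ≤ ∑ k ∈ range (n+1), ‖c k * b (n-k)‖ :=
          norm_sum_le _ _
      _ = ‖b n‖ + ‖c (n-1)‖
          + ∑ k ∈ Finset.Icc 1 (n-2), ‖c k * b (n-k)‖ := hsum_eq
      _ ≤ P n / (Nat.factorial (n-1)) + B1
          + ∑ k ∈ Finset.Icc 1 (n-2), B1 * (P (n-k) / (Nat.factorial (n-k-1))) := by
          apply add_le_add (add_le_add (hbn n hn) (hcb (n-1) (by omega)))
          exact Finset.sum_le_sum hterm_bound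
      _ = P n / (Nat.factorial (n-1))
          + B1 * (1 + ∑ k ∈ Finset.Icc 1 (n-2), P (n-k) / (Nat.factorial (n-k-1))) := by
          rw [mul_add, mul_one, Finset.mul_sum]
          ring
  have hnpos : (0:ℝ) < (n:ℝ) := by exact_mod_cast (by omega : 0 < n)
  have hfinal : ‖a n‖ ≤ (P n / (Nat.factorial (n-1))
      + B1 * (1 + ∑ k ∈ Finset.Icc 1 (n-2), P (n-k) / (Nat.factorial (n-k-1)))) / n := by
    rw [le_div_iff₀ hnpos]
    calc ‖a n‖ * n = ‖(n:ℂ) * a n‖ := by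
          rw [norm_mul, Complex.norm_natCast]; ring
      _ ≤ _ := hbound
  refine le_trans hfinal (le_of_eq ?_)
  have hfact : ((Nat.factorial n : ℝ)) = n * (Nat.factorial (n-1)) := by
    rw [← Nat.mul_factorial_pred (by omega : n ≠ 0)]
    push_cast
    ring
  have hfactpos : (0:ℝ) < (Nat.factorial (n-1) : ℝ) := by positivity
  set S : ℝ := ∑ k ∈ Finset.Icc 1 (n-2), P (n-k) / (Nat.factorial (n-k-1)) with hS
  have hg1 : 2 * (β - α) / (↑n * Real.pi) * Real.sin (Real.pi * (1 - α) / (β - α))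
      = B1 / n := by
    rw [hB1]
    ring
  rw [hfact, hg1, add_div, div_div, mul_comm ((Nat.factorial (n-1) : ℝ)) (n:ℝ),
    mul_div_right_comm]
end

section
/- Let α < 1 < β be real and let p be holomorphic on the open unit disk with p(0) = 1 and α < Re p(z) < β for all z. Then p is subordinate to f_{α,β}(z) = 1 + ((β-α)/π) i log((1 - e^{2πi(1-α)/(β-α)} z)/(1-z)), i.e., there is a holomorphic ω : 𝔻 → 𝔻 with ω(0)=0 and p = f_{α,β} ∘ ω. -/
open Complex Metric

theorem stmt_11 (α β : ℝ) (hα : α < 1) (hβ : 1 < β) (p : ℂ → ℂ)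
    (hp : AnalyticOn ℂ p (ball (0 : ℂ) 1)) (hp0 : p 0 = 1)
    (hstrip : ∀ z ∈ ball (0 : ℂ) 1, α < (p z).re ∧ (p z).re < β) :
    ∃ ω : ℂ → ℂ, AnalyticOn ℂ ω (ball (0 : ℂ) 1) ∧ ω 0 = 0 ∧
      (∀ z ∈ ball (0 : ℂ) 1, ω z ∈ ball (0 : ℂ) 1) ∧
      (∀ z ∈ ball (0 : ℂ) 1, p z =
        1 + ((β - α) / Real.pi) * Complex.I *
          Complex.log ((1 - Complex.exp (2 * Real.pi * Complex.I * (1 - α) / (β - α)) * ω z)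
            / (1 - ω z))) := by
  have hπ := Real.pi_pos
  have hβα : (0:ℝ) < β - α := by linarith
  obtain ⟨c, hcπ, hc⟩ : ∃ c : ℝ, c * Real.pi = β - α ∧ 0 < c :=
    ⟨(β - α) / Real.pi, by field_simp, div_pos hβα hπ⟩
  have hc0 : (c:ℂ) ≠ 0 := Complex.ofReal_ne_zero.mpr hc.ne'
  have hπ0 : (Real.pi:ℂ) ≠ 0 := Complex.ofReal_ne_zero.mpr hπ.ne'
  have hβαC : ((β:ℂ) - α) = (c:ℂ) * (Real.pi:ℂ) := by
    exact_mod_cast hcπ.symm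
  obtain ⟨θp, hθpc, hθp_pos, hθp_lt⟩ :
      ∃ t : ℝ, t * c = 1 - α ∧ 0 < t ∧ t < Real.pi := by
    refine ⟨(1 - α)/c, div_mul_cancel₀ _ hc.ne', div_pos (by linarith) hc, ?_⟩
    rw [div_lt_iff₀ hc]
    nlinarith
  -- the point a
  set a : ℂ := Complex.exp (2 * Real.pi * Complex.I * (1 - α) / (β - α)) with ha_def
  have h1αC : (1:ℂ) - α = (θp:ℂ) * (c:ℂ) := by
    exact_mod_cast hθpc.symm
  have hXa : (2 * Real.pi * Complex.I * (1 - (α:ℂ)) / ((β:ℂ) - α)) = ((2*θp : ℝ):ℂ) * Complex.I := by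
    rw [h1αC, hβαC]
    push_cast
    rw [div_eq_iff (mul_ne_zero hc0 hπ0)]
    ring
  have ha_eq : a = Complex.exp (((2*θp : ℝ):ℂ) * Complex.I) := by rw [ha_def, hXa]
  have habs_a : ‖a‖ = 1 := by
    rw [ha_eq, Complex.norm_exp]
    simp
  have ha_ne_one : a ≠ 1 := by
    rw [ha_eq]
    intro h
    rw [Complex.exp_eq_one_iff] at h
    obtain ⟨n, hn⟩ := h
    have him := congrArg Complex.im hn
    simp [Complex.mul_I_im] at him
    -- him : 2 * θp = n * (2 * π)
    have h0 : (0:ℝ) < (n:ℝ) := by nlinarith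
    have h1 : (n:ℝ) < 1 := by nlinarith
    have : (0:ℤ) < n := by exact_mod_cast h0
    have : n < 1 := by exact_mod_cast h1
    omega
  -- the functions
  set u : ℂ → ℝ := fun z => (p z).im / c with hu_def
  set v : ℂ → ℝ := fun z => (1 - (p z).re) / c with hv_def
  set w : ℂ → ℂ := fun z => Complex.I * (1 - p z) / (c:ℂ) with hw_def
  have hw_eq : ∀ z, w z = ((u z : ℝ):ℂ) + ((v z : ℝ):ℂ) * Complex.I := by
    intro z
    have hre := Complex.re_add_im (p z)
    have hnum : Complex.I * (1 - p z) = ((p z).im : ℂ) + ((1 - (p z).re : ℝ):ℂ) * Complex.I := by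
      push_cast
      linear_combination Complex.I * hre - ((p z).im:ℂ) * Complex.I_sq
    rw [hw_def]
    simp only [hu_def, hv_def]
    rw [hnum]
    push_cast
    field_simp
  have hw_re : ∀ z, (w z).re = u z := by intro z; rw [hw_eq]; simp
  have hw_im : ∀ z, (w z).im = v z := by intro z; rw [hw_eq]; simp
  set q : ℂ → ℂ := fun z => Complex.exp (w z) with hq_def
  -- bounds on v on the ball
  have hv_bounds : ∀ z ∈ ball (0:ℂ) 1, θp - Real.pi < v z ∧ v z < θp := by
    intro z hz
    obtain ⟨h1, h2⟩ := hstrip z hz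
    have e : (θp - Real.pi) * c = (1 - α) - (β - α) := by
      rw [sub_mul, hθpc, mul_comm Real.pi c, hcπ]
    constructor
    · rw [hv_def]
      rw [lt_div_iff₀ hc]
      rw [e]
      linarith
    · rw [hv_def]
      rw [div_lt_iff₀ hc]
      rw [hθpc]
      linarith
  -- key inequality : |q z - 1| < |q z - a|
  have hkey : ∀ z ∈ ball (0:ℂ) 1, ‖q z - 1‖ < ‖q z - a‖ := by
    intro z hz
    obtain ⟨hv1, hv2⟩ := hv_bounds z hz
    have hcos : Real.cos (v z - 2*θp) < Real.cos (v z) := by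
      have := Real.cos_sub_cos (v z - 2*θp) (v z)
      have hs1 : Real.sin (v z - θp) < 0 :=
        Real.sin_neg_of_neg_of_neg_pi_lt (by linarith) (by linarith)
      have hs2 : 0 < Real.sin θp := Real.sin_pos_of_pos_of_lt_pi hθp_pos hθp_lt
      have harg1 : (v z - 2*θp + v z)/2 = v z - θp := by ring
      have harg2 : (v z - 2*θp - v z)/2 = -θp := by ring
      rw [harg1, harg2, Real.sin_neg] at this
      nlinarith
    have hre : (q z * (starRingEnd ℂ) a).re < (q z * (starRingEnd ℂ) 1).re := by
      have hconj : (starRingEnd ℂ) a = Complex.exp (-(((2*θp : ℝ):ℂ) * Complex.I)) := by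
        rw [ha_eq, ← Complex.exp_conj]
        congr 1
        simp [Complex.ext_iff]
      rw [hconj, map_one, mul_one, hq_def]
      simp only [← Complex.exp_add]
      rw [Complex.exp_re, Complex.exp_re]
      have him1 : (w z + -(((2*θp : ℝ):ℂ) * Complex.I)).im = v z - 2*θp := by
        simp [hw_im z]; ring
      have hre1 : (w z + -(((2*θp : ℝ):ℂ) * Complex.I)).re = (w z).re := by simp
      rw [him1, hre1, hw_im z]
      have := Real.exp_pos (w z).re
      nlinarith
    have hns : Complex.normSq (q z - 1) < Complex.normSq (q z - a) := by
      rw [Complex.normSq_sub, Complex.normSq_sub]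
      have h1 : Complex.normSq a = 1 := by
        rw [← Complex.sq_norm, habs_a]; norm_num
      simp only [h1, Complex.normSq_one]
      linarith
    rw [← sq_lt_sq₀ (norm_nonneg _) (norm_nonneg _), Complex.sq_norm, Complex.sq_norm]
    exact hns
  have hqa_ne : ∀ z ∈ ball (0:ℂ) 1, q z - a ≠ 0 := by
    intro z hz h
    have := hkey z hz
    rw [h] at this
    simp at this
    exact absurd this (norm_nonneg _).not_gt
  -- define ω
  set ω : ℂ → ℂ := fun z => (q z - 1) / (q z - a) with hω_def
  have hω_ball : ∀ z ∈ ball (0:ℂ) 1, ω z ∈ ball (0:ℂ) 1 := by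
    intro z hz
    rw [hω_def, mem_ball_zero_iff]
    simp only [norm_div]
    have hpos : 0 < ‖q z - a‖ := by
      have := hkey z hz
      have h0 : 0 ≤ ‖q z - 1‖ := norm_nonneg _
      linarith
    rw [div_lt_one hpos]
    exact hkey z hz
  have hω_abs : ∀ z ∈ ball (0:ℂ) 1, ‖ω z‖ < 1 := by
    intro z hz
    have := hω_ball z hz
    rwa [mem_ball_zero_iff] at this
  -- analyticity
  have hw_an : AnalyticOn ℂ w (ball (0:ℂ) 1) := by
    rw [hw_def]
    exact (analyticOn_const.mul (analyticOn_const.sub hp)).div analyticOn_const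
      (fun z _ => hc0)
  have hq_an : AnalyticOn ℂ q (ball (0:ℂ) 1) := hw_an.cexp
  have hω_an : AnalyticOn ℂ ω (ball (0:ℂ) 1) :=
    (hq_an.sub analyticOn_const).div (hq_an.sub analyticOn_const) hqa_ne
  -- ω 0 = 0
  have hq0 : q 0 = 1 := by
    rw [hq_def]
    simp only [hw_def, hp0]
    norm_num
  have hω0 : ω 0 = 0 := by
    rw [hω_def]
    simp [hq0]
  refine ⟨ω, hω_an, hω0, hω_ball, ?_⟩
  intro z hz
  -- the main identity
  have hωz := hω_abs z hz
  have h1ω : (1:ℂ) - ω z ≠ 0 := by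
    intro h
    have : ω z = 1 := by linear_combination -h
    rw [this] at hωz
    simp at hωz
  have hratio : (1 - a * ω z) / (1 - ω z) = q z := by
    have hne := hqa_ne z hz
    have h1a : (1:ℂ) - a ≠ 0 := sub_ne_zero.mpr (Ne.symm ha_ne_one)
    have hωeq : ω z = (q z - 1) / (q z - a) := rfl
    have e1 : 1 - ω z = (1 - a) / (q z - a) := by
      rw [hωeq]
      field_simp
      ring
    have e2 : 1 - a * ω z = q z * (1 - a) / (q z - a) := by
      rw [hωeq]
      field_simp
      ring
    rw [e1, e2]
    field_simp
  have hlog : Complex.log (q z) = w z := by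
    rw [hq_def]
    apply Complex.log_exp
    · rw [hw_im z]
      have := (hv_bounds z hz).1
      linarith
    · rw [hw_im z]
      have := (hv_bounds z hz).2
      linarith
  rw [hratio, hlog, hw_def]
  have hcC : ((β:ℂ) - α) / (Real.pi:ℂ) = (c:ℂ) := by
    rw [hβαC, mul_div_assoc, div_self hπ0, mul_one]
  rw [hcC]
  have hstep : (c:ℂ) * Complex.I * (Complex.I * (1 - p z) / (c:ℂ)) = Complex.I^2 * (1 - p z) := by
    rw [show (c:ℂ) * Complex.I * (Complex.I * (1 - p z) / (c:ℂ))
          = Complex.I^2 * (1 - p z) * ((c:ℂ)/(c:ℂ)) from by ring,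
        div_self hc0, mul_one]
  rw [hstep, Complex.I_sq]
  ring
end

section
/- Let α < 1 < β be real and let p be holomorphic on the open unit disk with p(0) = 1, Taylor expansion p(z) = 1 + Σ_{m≥1} c_m z^m, and α < Re p(z) < β for all z in the disk. Then |c_m| ≤ (2(β-α)/π) sin(π(1-α)/(β-α)) for every m ≥ 1. -/
open Complex Metric MeasureTheory Filter Set

noncomputable section

/-- Integral of a nonzero integer character over a period is zero. -/
lemma unit_int {j : ℤ} (hj : j ≠ 0) :
    ∫ θ in (0:ℝ)..(2*Real.pi), Complex.exp ((j:ℂ) * θ * Complex.I) = 0 := by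
  have h : ∀ θ : ℝ, (j:ℂ) * θ * Complex.I = ((j:ℂ) * Complex.I) * θ := fun θ => by ring
  simp_rw [h]
  have hc : (j:ℂ) * Complex.I ≠ 0 :=
    mul_ne_zero (by exact_mod_cast hj) Complex.I_ne_zero
  rw [integral_exp_mul_complex hc]
  have h1 : (j:ℂ) * Complex.I * ((2*Real.pi:ℝ):ℂ) = (j:ℂ) * (2 * Real.pi * Complex.I) := by
    push_cast; ring
  rw [h1, Complex.exp_int_mul_two_pi_mul_I]
  simp

lemma unit_int_zero :
    ∫ θ in (0:ℝ)..(2*Real.pi), Complex.exp (((0:ℤ):ℂ) * θ * Complex.I)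
      = ((2*Real.pi:ℝ):ℂ) := by
  simp

/-- Summability of coefficients against any radius `< 1`. -/
lemma summable_coeff (c : ℕ → ℂ) (p : ℂ → ℂ)
    (hps : ∀ z ∈ ball (0 : ℂ) 1, HasSum (fun n : ℕ => c n * z ^ n) (p z))
    {r : ℝ} (hr0 : 0 ≤ r) (hr1 : r < 1) :
    Summable (fun n : ℕ => ‖c n‖ * r ^ n) := by
  set R : ℝ := (r+1)/2 with hR
  have hrR : r < R := by rw [hR]; linarith
  have hR1 : R < 1 := by rw [hR]; linarith
  have hR0 : 0 < R := by rw [hR]; linarith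
  have hz : (R:ℂ) ∈ ball (0:ℂ) 1 := by
    simp [Complex.norm_real, Real.norm_eq_abs, abs_of_pos hR0, hR1]
  have hs := (hps _ hz).summable
  have h0 : Filter.Tendsto (fun n => ‖c n‖ * R ^ n) atTop (nhds 0) := by
    have := hs.tendsto_atTop_zero
    have h := this.norm
    simp only [norm_mul, norm_pow, Complex.norm_real, Real.norm_eq_abs,
      abs_of_pos hR0] at h
    simpa using h
  obtain ⟨C, hC⟩ := h0.bddAbove_range
  have hCb : ∀ n, ‖c n‖ * R ^ n ≤ C := fun n => hC ⟨n, rfl⟩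
  have hgeo : Summable (fun n : ℕ => C * (r/R) ^ n) :=
    (summable_geometric_of_lt_one (div_nonneg hr0 hR0.le)
      ((div_lt_one hR0).mpr hrR)).mul_left C
  refine Summable.of_nonneg_of_le (fun n => by positivity) (fun n => ?_) hgeo
  have key : ‖c n‖ * r ^ n
      = (‖c n‖ * R ^ n) * (r/R) ^ n := by
    field_simp
    rw [mul_assoc, ← mul_pow]
    congr 2
    field_simp
  rw [key]
  exact mul_le_mul_of_nonneg_right (hCb n) (by positivity)

lemma mem_ball_boundary {r : ℝ} (hr0 : 0 ≤ r) (hr1 : r < 1) (θ : ℝ) :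
    (r:ℂ) * Complex.exp (θ * Complex.I) ∈ ball (0:ℂ) 1 := by
  simp only [mem_ball, dist_zero_right, norm_mul,
    Complex.norm_real, Real.norm_eq_abs, _root_.abs_of_nonneg hr0, Complex.norm_exp_ofReal_mul_I, mul_one]
  exact hr1

lemma cont_boundary (c : ℕ → ℂ) (p : ℂ → ℂ)
    (hps : ∀ z ∈ ball (0 : ℂ) 1, HasSum (fun n : ℕ => c n * z ^ n) (p z))
    {r : ℝ} (hr0 : 0 ≤ r) (hr1 : r < 1) :
    Continuous (fun θ : ℝ => p ((r:ℂ) * Complex.exp (θ * Complex.I))) := by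
  have heq : (fun θ : ℝ => p ((r:ℂ) * Complex.exp (θ * Complex.I)))
      = fun θ : ℝ => ∑' n : ℕ, c n * ((r:ℂ) * Complex.exp (θ * Complex.I)) ^ n :=
    funext fun θ => ((hps _ (mem_ball_boundary hr0 hr1 θ)).tsum_eq).symm
  rw [heq]
  refine continuous_tsum (fun n => by continuity)
    (summable_coeff c p hps hr0 hr1) (fun n θ => ?_)
  have h1 : ‖Complex.exp (Complex.I * θ)‖ = 1 := by
    rw [mul_comm]; exact Complex.norm_exp_ofReal_mul_I θ
  simp [mul_pow, _root_.abs_of_nonneg hr0, h1, mul_comm]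

/-- Fourier coefficient extraction as a `HasSum`. -/
lemma fourier_hasSum (c : ℕ → ℂ) (p : ℂ → ℂ)
    (hps : ∀ z ∈ ball (0 : ℂ) 1, HasSum (fun n : ℕ => c n * z ^ n) (p z))
    {r : ℝ} (hr0 : 0 ≤ r) (hr1 : r < 1) (k : ℤ) :
    HasSum (fun n : ℕ => c n * (r:ℂ)^n *
        ∫ θ in (0:ℝ)..(2*Real.pi), Complex.exp ((((n:ℤ)+k : ℤ):ℂ) * θ * Complex.I))
      (∫ θ in (0:ℝ)..(2*Real.pi),
        p ((r:ℂ) * Complex.exp (θ * Complex.I)) * Complex.exp ((k:ℂ) * θ * Complex.I)) := by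
  have h2π : (0:ℝ) ≤ 2*Real.pi := by positivity
  set F : ℕ → ℝ → ℂ := fun n θ =>
    c n * ((r:ℂ) * Complex.exp (θ * Complex.I)) ^ n * Complex.exp ((k:ℂ) * θ * Complex.I)
    with hF
  have habs1 : ∀ θ : ℝ, ‖Complex.exp ((k:ℂ) * θ * Complex.I)‖ = 1 := by
    intro θ
    have : (k:ℂ) * θ * Complex.I = ((k*θ : ℝ):ℂ) * Complex.I := by push_cast; ring
    rw [this, Complex.norm_exp_ofReal_mul_I]
  have hFnorm : ∀ n θ, ‖F n θ‖ = ‖c n‖ * r ^ n := by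
    intro n θ
    have h1 : ‖Complex.exp (θ * Complex.I)‖ = 1 :=
      Complex.norm_exp_ofReal_mul_I θ
    simp [hF, mul_pow, _root_.abs_of_nonneg hr0, h1, habs1 θ]
  have hFcont : ∀ n, Continuous (F n) := fun n => by
    apply Continuous.mul
    · exact continuous_const.mul (((continuous_const.mul
        ((Complex.continuous_ofReal.mul continuous_const).cexp)).pow n))
    · exact ((continuous_const.mul Complex.continuous_ofReal).mul continuous_const).cexp
  have hFint : ∀ n, Integrable (F n) (volume.restrict (Ioc (0:ℝ) (2*Real.pi))) :=
    fun n => (hFcont n).integrableOn_Ioc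
  have hFsum : Summable fun n => ∫ θ, ‖F n θ‖ ∂(volume.restrict (Ioc (0:ℝ) (2*Real.pi))) := by
    have : (fun n => ∫ θ, ‖F n θ‖ ∂(volume.restrict (Ioc (0:ℝ) (2*Real.pi))))
        = fun n => (2*Real.pi) * (‖c n‖ * r ^ n) := by
      funext n
      simp only [hFnorm n]
      rw [integral_const]
      simp [Real.volume_Ioc, ENNReal.toReal_ofReal h2π]
      exact Or.inl Real.pi_pos.le
    rw [this]
    exact (summable_coeff c p hps hr0 hr1).mul_left _
  have hmain := hasSum_integral_of_summable_integral_norm hFint hFsum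
  have htsum : ∀ θ : ℝ, ∑' n, F n θ
      = p ((r:ℂ) * Complex.exp (θ * Complex.I)) * Complex.exp ((k:ℂ) * θ * Complex.I) := by
    intro θ
    exact ((hps _ (mem_ball_boundary hr0 hr1 θ)).mul_right _).tsum_eq
  have hterm : ∀ n : ℕ, ∫ θ, F n θ ∂(volume.restrict (Ioc (0:ℝ) (2*Real.pi)))
      = c n * (r:ℂ)^n *
        ∫ θ in (0:ℝ)..(2*Real.pi), Complex.exp ((((n:ℤ)+k : ℤ):ℂ) * θ * Complex.I) := by
    intro n
    rw [← intervalIntegral.integral_of_le h2π, ← intervalIntegral.integral_const_mul]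
    apply intervalIntegral.integral_congr
    intro θ _
    have : ((((n:ℤ)+k : ℤ):ℂ)) * θ * Complex.I
        = (n:ℂ) * (θ * Complex.I) + (k:ℂ) * θ * Complex.I := by push_cast; ring
    show F n θ = c n * (r:ℂ)^n * Complex.exp ((((n:ℤ)+k : ℤ):ℂ) * θ * Complex.I)
    rw [hF]
    simp only [this, Complex.exp_add, mul_pow, ← Complex.exp_nat_mul]
    ring
  rw [← intervalIntegral.integral_of_le h2π] at hmain
  have : (∫ θ in (0:ℝ)..(2*Real.pi), ∑' n, F n θ)
      = ∫ θ in (0:ℝ)..(2*Real.pi),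
        p ((r:ℂ) * Complex.exp (θ * Complex.I)) * Complex.exp ((k:ℂ) * θ * Complex.I) :=
    intervalIntegral.integral_congr (fun θ _ => htsum θ)
  rw [this] at hmain
  have hfun : (fun n => ∫ θ, F n θ ∂(volume.restrict (Ioc (0:ℝ) (2*Real.pi))))
      = fun n : ℕ => c n * (r:ℂ)^n *
        ∫ θ in (0:ℝ)..(2*Real.pi), Complex.exp ((((n:ℤ)+k : ℤ):ℂ) * θ * Complex.I) :=
    funext hterm
  rwa [hfun] at hmain

/-- `∫₀^{2π} (cos t − cos s)⁺ dt = 2 (sin s − s cos s)` for `s ∈ [0, π]`. -/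
lemma cos_part_integral {s : ℝ} (hs0 : 0 ≤ s) (hsπ : s ≤ Real.pi) :
    ∫ t in (0:ℝ)..(2*Real.pi), max (Real.cos t - Real.cos s) 0
      = 2*(Real.sin s - s * Real.cos s) := by
  have hπ := Real.pi_pos
  have hint : ∀ a b : ℝ, IntervalIntegrable
      (fun t => max (Real.cos t - Real.cos s) 0) volume a b :=
    fun a b => ((Real.continuous_cos.sub continuous_const).max continuous_const).intervalIntegrable a b
  have hs2π : s ≤ 2*Real.pi - s := by linarith
  have h2πs : 2*Real.pi - s ≤ 2*Real.pi := by linarith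
  have split1 : ∫ t in (0:ℝ)..(2*Real.pi), max (Real.cos t - Real.cos s) 0
      = (∫ t in (0:ℝ)..s, max (Real.cos t - Real.cos s) 0)
        + ((∫ t in s..(2*Real.pi - s), max (Real.cos t - Real.cos s) 0)
        + (∫ t in (2*Real.pi - s)..(2*Real.pi), max (Real.cos t - Real.cos s) 0)) := by
    rw [intervalIntegral.integral_add_adjacent_intervals (hint s (2*Real.pi-s)) (hint _ _),
      intervalIntegral.integral_add_adjacent_intervals (hint 0 s) (hint _ _)]
  have h1 : (∫ t in (0:ℝ)..s, max (Real.cos t - Real.cos s) 0)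
      = Real.sin s - s * Real.cos s := by
    have : (∫ t in (0:ℝ)..s, max (Real.cos t - Real.cos s) 0)
        = ∫ t in (0:ℝ)..s, (Real.cos t - Real.cos s) := by
      apply intervalIntegral.integral_congr
      intro t ht
      rw [uIcc_of_le hs0] at ht
      exact max_eq_left (sub_nonneg.2 (Real.cos_le_cos_of_nonneg_of_le_pi ht.1 hsπ ht.2))
    rw [this, intervalIntegral.integral_sub (Real.continuous_cos.intervalIntegrable _ _)
      (intervalIntegrable_const)]
    simp [integral_cos]
  have h2 : (∫ t in s..(2*Real.pi - s), max (Real.cos t - Real.cos s) 0) = 0 := by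
    have : (∫ t in s..(2*Real.pi - s), max (Real.cos t - Real.cos s) 0)
        = ∫ t in s..(2*Real.pi - s), (0:ℝ) := by
      apply intervalIntegral.integral_congr
      intro t ht
      rw [uIcc_of_le hs2π] at ht
      have hcos : Real.cos t ≤ Real.cos s := by
        rcases le_total t Real.pi with h|h
        · exact Real.cos_le_cos_of_nonneg_of_le_pi hs0 h ht.1
        · have : Real.cos t = Real.cos (2*Real.pi - t) := by
            rw [Real.cos_two_pi_sub]
          rw [this]
          exact Real.cos_le_cos_of_nonneg_of_le_pi hs0 (by linarith) (by linarith [ht.2])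
      exact max_eq_right (sub_nonpos.2 hcos)
    rw [this]; simp
  have h3 : (∫ t in (2*Real.pi - s)..(2*Real.pi), max (Real.cos t - Real.cos s) 0)
      = Real.sin s - s * Real.cos s := by
    have : (∫ t in (2*Real.pi - s)..(2*Real.pi), max (Real.cos t - Real.cos s) 0)
        = ∫ t in (2*Real.pi - s)..(2*Real.pi), (Real.cos t - Real.cos s) := by
      apply intervalIntegral.integral_congr
      intro t ht
      rw [uIcc_of_le h2πs] at ht
      have hcos : Real.cos s ≤ Real.cos t := by
        have : Real.cos t = Real.cos (2*Real.pi - t) := by rw [Real.cos_two_pi_sub]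
        rw [this]
        exact Real.cos_le_cos_of_nonneg_of_le_pi (by linarith [ht.2]) hsπ (by linarith [ht.1])
      exact max_eq_left (sub_nonneg.2 hcos)
    rw [this, intervalIntegral.integral_sub (Real.continuous_cos.intervalIntegrable _ _)
      (intervalIntegrable_const)]
    rw [integral_cos]
    rw [Real.sin_two_pi, Real.sin_two_pi_sub]
    simp

  rw [split1, h1, h2, h3]
  ring

lemma periodize (g : ℝ → ℝ) (hg : Continuous g) (hgp : Function.Periodic g (2*Real.pi))
    {m : ℕ} (hm : 1 ≤ m) (φ : ℝ) :
    ∫ θ in (0:ℝ)..(2*Real.pi), g (m*θ + φ) = ∫ t in (0:ℝ)..(2*Real.pi), g t := by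
  have hm0 : (m:ℝ) ≠ 0 := Nat.cast_ne_zero.mpr (by omega)
  rw [intervalIntegral.integral_comp_mul_add g hm0 φ]
  have e0 : (m:ℝ) * 0 + φ = φ := by ring
  have e1 : (m:ℝ) * (2*Real.pi) + φ = φ + (m:ℤ) • (2*Real.pi) := by
    rw [zsmul_eq_mul]; push_cast; ring
  rw [e0, e1, hgp.intervalIntegral_add_zsmul_eq (m:ℤ) φ
    (fun t₁ t₂ => hg.intervalIntegrable t₁ t₂),
    hgp.intervalIntegral_add_eq φ 0]
  rw [zsmul_eq_mul, smul_eq_mul, zero_add]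
  field_simp
  simp

/-- The bathtub-principle bound. -/
lemma bathtub {M a : ℝ} (hM : 0 < M) (ha0 : 0 < a) (haM : a < M)
    (u : ℝ → ℝ) (hu : Continuous u) (hu0 : ∀ θ, 0 ≤ u θ) (huM : ∀ θ, u θ ≤ M)
    (hmean : ∫ θ in (0:ℝ)..(2*Real.pi), u θ = 2*Real.pi*a)
    {m : ℕ} (hm : 1 ≤ m) (φ : ℝ) :
    ∫ θ in (0:ℝ)..(2*Real.pi), u θ * Real.cos (m*θ + φ)
      ≤ 2*M*Real.sin (Real.pi*a/M) := by
  have hπ := Real.pi_pos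
  set s : ℝ := Real.pi*a/M with hs
  have hs0 : 0 < s := by rw [hs]; positivity
  have hsπ : s < Real.pi := by
    rw [hs, div_lt_iff₀ hM]
    calc Real.pi * a < Real.pi * M := by nlinarith
    _ = Real.pi * M := rfl
  set lam : ℝ := Real.cos s with hlam
  set g : ℝ → ℝ := fun t => max (Real.cos t - lam) 0 with hg
  have hgcont : Continuous g :=
    (Real.continuous_cos.sub continuous_const).max continuous_const
  have hgper : Function.Periodic g (2*Real.pi) := by
    intro t
    simp [hg, Real.cos_add_two_pi]
  have hcont1 : Continuous fun θ : ℝ => Real.cos (m*θ + φ) :=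
    Real.continuous_cos.comp ((continuous_const.mul continuous_id).add continuous_const)
  have key : ∀ θ, u θ * Real.cos (m*θ+φ) ≤ M * g (m*θ+φ) + lam * u θ := by
    intro θ
    rcases le_total lam (Real.cos (m*θ+φ)) with h|h
    · have : g (m*θ+φ) = Real.cos (m*θ+φ) - lam := max_eq_left (sub_nonneg.2 h)
      rw [this]
      nlinarith [hu0 θ, huM θ]
    · have : g (m*θ+φ) = 0 := max_eq_right (sub_nonpos.2 h)
      rw [this]
      nlinarith [hu0 θ]
  have hgc2 : Continuous fun θ : ℝ => g (m*θ+φ) := by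
    apply hgcont.comp
    continuity
  have hint1 : IntervalIntegrable (fun θ => u θ * Real.cos (m*θ+φ)) volume 0 (2*Real.pi) :=
    (hu.mul hcont1).intervalIntegrable _ _
  have hint2 : IntervalIntegrable (fun θ => M * g (m*θ+φ) + lam * u θ) volume 0 (2*Real.pi) :=
    ((continuous_const.mul hgc2).add (continuous_const.mul hu)).intervalIntegrable _ _
  have step1 : ∫ θ in (0:ℝ)..(2*Real.pi), u θ * Real.cos (m*θ + φ)
      ≤ ∫ θ in (0:ℝ)..(2*Real.pi), (M * g (m*θ+φ) + lam * u θ) :=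
    intervalIntegral.integral_mono_on (by positivity) hint1 hint2 (fun θ _ => key θ)
  have step2 : ∫ θ in (0:ℝ)..(2*Real.pi), (M * g (m*θ+φ) + lam * u θ)
      = M * (∫ θ in (0:ℝ)..(2*Real.pi), g (m*θ+φ)) + lam * (2*Real.pi*a) := by
    rw [intervalIntegral.integral_add (f := fun θ => M * g (m*θ+φ)) (g := fun θ => lam * u θ)
      ((continuous_const.mul hgc2).intervalIntegrable _ _)
      ((continuous_const.mul hu).intervalIntegrable _ _),
      intervalIntegral.integral_const_mul, intervalIntegral.integral_const_mul, hmean]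
  have step3 : (∫ θ in (0:ℝ)..(2*Real.pi), g (m*θ+φ)) = 2*(Real.sin s - s * lam) := by
    rw [periodize g hgcont hgper hm φ]
    exact cos_part_integral hs0.le hsπ.le
  have hMs : M * s = Real.pi * a := by
    rw [hs]; field_simp
  calc ∫ θ in (0:ℝ)..(2*Real.pi), u θ * Real.cos (m*θ + φ)
      ≤ M * (2*(Real.sin s - s * lam)) + lam * (2*Real.pi*a) := by
        rw [step2, step3] at step1; exact step1
    _ = 2*M*Real.sin s - 2*lam*(M*s - Real.pi*a) := by ring
    _ = 2*M*Real.sin s := by rw [hMs]; ring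

theorem stmt_12 (α β : ℝ) (hα : α < 1) (hβ : 1 < β) (p : ℂ → ℂ) (c : ℕ → ℂ)
    (hps : ∀ z ∈ ball (0 : ℂ) 1, HasSum (fun m : ℕ => c m * z ^ m) (p z))
    (hc0 : c 0 = 1)
    (hstrip : ∀ z ∈ ball (0 : ℂ) 1, α < (p z).re ∧ (p z).re < β) :
    ∀ m : ℕ, 1 ≤ m →
      ‖c m‖ ≤ (2 * (β - α) / Real.pi) * Real.sin (Real.pi * (1 - α) / (β - α)) := by
  intro m hm
  have hπ := Real.pi_pos
  set M : ℝ := β - α with hMdef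
  set a : ℝ := 1 - α with hadef
  have hM : 0 < M := by rw [hMdef]; linarith
  have ha0 : 0 < a := by rw [hadef]; linarith
  have haM : a < M := by rw [hadef, hMdef]; linarith
  set B : ℝ := 2 * M / Real.pi * Real.sin (Real.pi * a / M) with hBdef
  show ‖c m‖ ≤ B
  have hsin0 : 0 ≤ Real.sin (Real.pi * a / M) := by
    apply Real.sin_nonneg_of_nonneg_of_le_pi
    · positivity
    · rw [div_le_iff₀ hM]; nlinarith
  have hB0 : 0 ≤ B := by rw [hBdef]; positivity
  have key : ∀ r : ℝ, 0 < r → r < 1 → ‖c m‖ * r ^ m ≤ B := by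
    intro r hr0 hr1
    have hr0' : (0:ℝ) ≤ r := hr0.le
    have h2π : (0:ℝ) ≤ 2*Real.pi := by positivity
    have hpc : Continuous (fun θ : ℝ => p ((r:ℂ) * Complex.exp (θ * Complex.I))) :=
      cont_boundary c p hps hr0' hr1
    -- the three Fourier integrals
    have hIm := fourier_hasSum c p hps hr0' hr1 (-(m:ℤ))
    have hIm' : (fun n : ℕ => c n * (r:ℂ)^n *
        ∫ θ in (0:ℝ)..(2*Real.pi), Complex.exp ((((n:ℤ)+(-(m:ℤ)) : ℤ):ℂ) * θ * Complex.I))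
        = fun n : ℕ => if n = m then ((2*Real.pi:ℝ):ℂ) * (c m * (r:ℂ)^m) else 0 := by
      funext n
      by_cases h : n = m
      · subst h
        rw [if_pos rfl]
        have h0 : ((n:ℤ)+(-(n:ℤ)) : ℤ) = 0 := by ring
        rw [h0, unit_int_zero]
        push_cast
        ring
      · rw [if_neg h]
        have hj : ((n:ℤ)+(-(m:ℤ)) : ℤ) ≠ 0 := by omega
        rw [unit_int hj, mul_zero]
    rw [hIm'] at hIm
    have Ieq : (∫ θ in (0:ℝ)..(2*Real.pi),
        p ((r:ℂ) * Complex.exp (θ * Complex.I)) * Complex.exp (((-(m:ℤ):ℤ):ℂ) * θ * Complex.I))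
        = ((2*Real.pi:ℝ):ℂ) * (c m * (r:ℂ)^m) :=
      (hIm.unique (hasSum_ite_eq m (((2*Real.pi:ℝ):ℂ) * (c m * (r:ℂ)^m))))
    have hIp := fourier_hasSum c p hps hr0' hr1 (m:ℤ)
    have hIp' : (fun n : ℕ => c n * (r:ℂ)^n *
        ∫ θ in (0:ℝ)..(2*Real.pi), Complex.exp ((((n:ℤ)+(m:ℤ) : ℤ):ℂ) * θ * Complex.I))
        = fun _ : ℕ => (0:ℂ) := by
      funext n
      have hj : ((n:ℤ)+(m:ℤ) : ℤ) ≠ 0 := by omega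
      rw [unit_int hj, mul_zero]
    rw [hIp'] at hIp
    have Ipeq : (∫ θ in (0:ℝ)..(2*Real.pi),
        p ((r:ℂ) * Complex.exp (θ * Complex.I)) * Complex.exp ((((m:ℤ):ℤ):ℂ) * θ * Complex.I))
        = 0 := hIp.unique hasSum_zero
    have hI0 := fourier_hasSum c p hps hr0' hr1 0
    have hI0' : (fun n : ℕ => c n * (r:ℂ)^n *
        ∫ θ in (0:ℝ)..(2*Real.pi), Complex.exp ((((n:ℤ)+(0:ℤ) : ℤ):ℂ) * θ * Complex.I))
        = fun n : ℕ => if n = 0 then ((2*Real.pi:ℝ):ℂ) else 0 := by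
      funext n
      by_cases h : n = 0
      · subst h
        rw [if_pos rfl]
        have h0 : ((0:ℕ):ℤ)+(0:ℤ) = 0 := by ring
        rw [h0, unit_int_zero, hc0]
        push_cast
        ring
      · rw [if_neg h]
        have hj : ((n:ℤ)+(0:ℤ) : ℤ) ≠ 0 := by omega
        rw [unit_int hj, mul_zero]
    rw [hI0'] at hI0
    have I0eq : (∫ θ in (0:ℝ)..(2*Real.pi),
        p ((r:ℂ) * Complex.exp (θ * Complex.I)) * Complex.exp ((((0:ℤ)):ℂ) * θ * Complex.I))
        = ((2*Real.pi:ℝ):ℂ) := hI0.unique (hasSum_ite_eq 0 _)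
    have I0eq' : (∫ θ in (0:ℝ)..(2*Real.pi),
        p ((r:ℂ) * Complex.exp (θ * Complex.I))) = ((2*Real.pi:ℝ):ℂ) := by
      rw [← I0eq]
      apply intervalIntegral.integral_congr
      intro θ _
      simp
    -- conjugate integral vanishes
    have hconj : (∫ θ in (0:ℝ)..(2*Real.pi),
        (starRingEnd ℂ) (p ((r:ℂ) * Complex.exp (θ * Complex.I)) *
          Complex.exp ((((m:ℤ):ℤ):ℂ) * θ * Complex.I))) = 0 := by
      rw [intervalIntegral.integral_of_le h2π, integral_conj,
        ← intervalIntegral.integral_of_le h2π, Ipeq, map_zero]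
    -- real-part integral
    have hmean : (∫ θ in (0:ℝ)..(2*Real.pi), (p ((r:ℂ) * Complex.exp (θ * Complex.I))).re)
        = 2*Real.pi := by
      have hint : IntervalIntegrable (fun θ : ℝ => p ((r:ℂ) * Complex.exp (θ * Complex.I)))
          volume 0 (2*Real.pi) := hpc.intervalIntegrable _ _
      have := Complex.reCLM.intervalIntegral_comp_comm hint
      rw [I0eq'] at this
      simpa using this
    -- the key complex integral
    set E : ℝ → ℂ := fun θ => Complex.exp (((-(m:ℤ):ℤ):ℂ) * θ * Complex.I) with hE
    have hEcont : Continuous E := by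
      apply Complex.continuous_exp.comp
      exact (continuous_const.mul Complex.continuous_ofReal).mul continuous_const
    have hE0 : (∫ θ in (0:ℝ)..(2*Real.pi), E θ) = 0 := unit_int (by omega)
    set u : ℝ → ℝ := fun θ => (p ((r:ℂ) * Complex.exp (θ * Complex.I))).re - α with hu
    have hucont : Continuous u := (Complex.continuous_re.comp hpc).sub continuous_const
    have hZint : (∫ θ in (0:ℝ)..(2*Real.pi), ((u θ : ℝ):ℂ) * E θ)
        = (Real.pi:ℂ) * (c m * (r:ℂ)^m) := by
      have hpt : ∀ θ : ℝ, ((u θ : ℝ):ℂ) * E θ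
          = (1/2 : ℂ) * (p ((r:ℂ) * Complex.exp (θ * Complex.I)) * E θ)
            + (1/2 : ℂ) * (starRingEnd ℂ) (p ((r:ℂ) * Complex.exp (θ * Complex.I)) *
                Complex.exp ((((m:ℤ):ℤ):ℂ) * θ * Complex.I))
            - (α:ℂ) * E θ := by
        intro θ
        set z : ℂ := p ((r:ℂ) * Complex.exp (θ * Complex.I)) with hz
        have hcc : (starRingEnd ℂ) (Complex.exp ((((m:ℤ):ℤ):ℂ) * θ * Complex.I)) = E θ := by
          rw [← Complex.exp_conj]
          congr 1
          simp only [map_mul, Complex.conj_I, Complex.conj_ofReal, map_intCast]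
          push_cast
          ring
        have hre : ((z.re : ℝ):ℂ) = (z + (starRingEnd ℂ) z) / 2 := by
          rw [Complex.add_conj]
          push_cast
          ring
        rw [map_mul, hcc, hu]
        push_cast
        rw [hre]
        ring
      rw [intervalIntegral.integral_congr (fun θ _ => hpt θ)]
      have hi1 : IntervalIntegrable (fun θ : ℝ =>
          (1/2 : ℂ) * (p ((r:ℂ) * Complex.exp (θ * Complex.I)) * E θ)) volume 0 (2*Real.pi) :=
        (continuous_const.mul (hpc.mul hEcont)).intervalIntegrable _ _
      have hi2 : IntervalIntegrable (fun θ : ℝ =>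
          (1/2 : ℂ) * (starRingEnd ℂ) (p ((r:ℂ) * Complex.exp (θ * Complex.I)) *
            Complex.exp ((((m:ℤ):ℤ):ℂ) * θ * Complex.I))) volume 0 (2*Real.pi) := by
        apply Continuous.intervalIntegrable
        apply continuous_const.mul
        apply Complex.continuous_conj.comp
        apply hpc.mul
        apply Complex.continuous_exp.comp
        exact (continuous_const.mul Complex.continuous_ofReal).mul continuous_const
      have hi3 : IntervalIntegrable (fun θ : ℝ => (α:ℂ) * E θ) volume 0 (2*Real.pi) :=
        (continuous_const.mul hEcont).intervalIntegrable _ _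
      rw [intervalIntegral.integral_sub (hi1.add hi2) hi3,
        intervalIntegral.integral_add hi1 hi2,
        intervalIntegral.integral_const_mul, intervalIntegral.integral_const_mul,
        intervalIntegral.integral_const_mul, Ieq, hconj, hE0]
      push_cast
      ring
    set Z : ℂ := (Real.pi:ℂ) * (c m * (r:ℂ)^m) with hZ
    have habsZ : ‖Z‖ = Real.pi * (‖c m‖ * r ^ m) := by
      rw [hZ]
      simp [map_mul, Complex.norm_real, Real.norm_eq_abs, abs_of_pos hπ, _root_.abs_of_nonneg hr0',
        map_pow]
    by_cases hZ0 : Z = 0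
    · have : ‖c m‖ * r ^ m = 0 := by
        have := habsZ
        rw [hZ0, norm_zero] at this
        nlinarith
      rw [this]; exact hB0
    -- phase rotation
    set φ : ℝ := Z.arg with hφ
    have hrot : ((‖Z‖ : ℝ):ℂ) = Z * Complex.exp (-((φ:ℝ):ℂ) * Complex.I) := by
      have h := Complex.norm_mul_exp_arg_mul_I Z
      calc ((‖Z‖ : ℝ):ℂ)
          = ((‖Z‖ : ℝ):ℂ) * (Complex.exp ((φ:ℝ) * Complex.I) *
              Complex.exp (-((φ:ℝ):ℂ) * Complex.I)) := by
            rw [← Complex.exp_add]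
            simp
        _ = Z * Complex.exp (-((φ:ℝ):ℂ) * Complex.I) := by rw [← mul_assoc, h]
    have hrot2 : ((‖Z‖ : ℝ):ℂ)
        = ∫ θ in (0:ℝ)..(2*Real.pi),
            ((u θ : ℝ):ℂ) * Complex.exp (((-(m*θ+φ) : ℝ):ℂ) * Complex.I) := by
      rw [hrot, ← hZint, ← intervalIntegral.integral_mul_const]
      apply intervalIntegral.integral_congr
      intro θ _
      show ((u θ : ℝ):ℂ) * E θ * Complex.exp (-((φ:ℝ):ℂ) * Complex.I)
          = ((u θ : ℝ):ℂ) * Complex.exp (((-(m*θ+φ) : ℝ):ℂ) * Complex.I)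
      simp only [hE]
      rw [mul_assoc, ← Complex.exp_add]
      congr 1
      congr 1
      push_cast
      ring
    have hre2 : ‖Z‖
        = ∫ θ in (0:ℝ)..(2*Real.pi), u θ * Real.cos ((m:ℝ)*θ+φ) := by
      have hint : IntervalIntegrable (fun θ : ℝ =>
          ((u θ : ℝ):ℂ) * Complex.exp (((-(m*θ+φ) : ℝ):ℂ) * Complex.I)) volume 0 (2*Real.pi) := by
        apply Continuous.intervalIntegrable
        apply Continuous.mul
        · exact Complex.continuous_ofReal.comp hucont
        · apply Complex.continuous_exp.comp
          exact (Complex.continuous_ofReal.comp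
            (((continuous_const.mul continuous_id).add continuous_const).neg)).mul
            continuous_const
      have hcomm := Complex.reCLM.intervalIntegral_comp_comm hint
      rw [← hrot2] at hcomm
      simp only [Complex.reCLM_apply] at hcomm
      have hpt : ∀ θ : ℝ, (((u θ : ℝ):ℂ) * Complex.exp (((-(m*θ+φ) : ℝ):ℂ) * Complex.I)).re
          = u θ * Real.cos ((m:ℝ)*θ+φ) := by
        intro θ
        have h1 : Real.cos (-((m:ℝ)*θ+φ)) = Real.cos ((m:ℝ)*θ+φ) := Real.cos_neg _
        rw [Complex.mul_re, Complex.ofReal_re, Complex.ofReal_im,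
          Complex.exp_ofReal_mul_I_re, zero_mul, sub_zero, h1]
      rw [← intervalIntegral.integral_congr (fun θ _ => hpt θ), hcomm]
      simp
    -- bounds for u
    have hu0 : ∀ θ, 0 ≤ u θ := by
      intro θ
      have := (hstrip _ (mem_ball_boundary hr0' hr1 θ)).1
      rw [hu]; dsimp only; linarith
    have huM : ∀ θ, u θ ≤ M := by
      intro θ
      have := (hstrip _ (mem_ball_boundary hr0' hr1 θ)).2
      rw [hu, hMdef]; dsimp only; linarith
    have humean : ∫ θ in (0:ℝ)..(2*Real.pi), u θ = 2*Real.pi*a := by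
      have hcontre : Continuous fun θ : ℝ => (p ((r:ℂ) * Complex.exp (θ * Complex.I))).re :=
        Complex.continuous_re.comp hpc
      have h := intervalIntegral.integral_sub
        (hcontre.intervalIntegrable (0:ℝ) (2*Real.pi))
        (intervalIntegrable_const (μ := volume) (c := α) (a := (0:ℝ)) (b := 2*Real.pi))
      show ∫ θ in (0:ℝ)..(2*Real.pi),
          ((p ((r:ℂ) * Complex.exp (θ * Complex.I))).re - α) = 2*Real.pi*a
      rw [h, hmean, intervalIntegral.integral_const]
      rw [hadef]
      simp [smul_eq_mul]
      ring
    have hbath := bathtub hM ha0 haM u hucont hu0 huM humean hm φ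
    rw [← hre2] at hbath
    rw [habsZ] at hbath
    rw [hBdef]
    rw [div_mul_eq_mul_div, le_div_iff₀ hπ]
    nlinarith
  -- limit r → 1
  have hmem : (1:ℝ) ∈ closure (Ioo (0:ℝ) 1) := by
    rw [closure_Ioo (by norm_num : (0:ℝ) ≠ 1)]
    exact ⟨zero_le_one, le_refl 1⟩
  haveI hne : (nhdsWithin (1:ℝ) (Ioo 0 1)).NeBot :=
    mem_closure_iff_nhdsWithin_neBot.mp hmem
  have hcontr : Continuous fun r : ℝ => ‖c m‖ * r ^ m := by continuity
  have hlim : Tendsto (fun r : ℝ => ‖c m‖ * r ^ m)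
      (nhdsWithin 1 (Ioo (0:ℝ) 1)) (nhds (‖c m‖)) := by
    have h1 := (hcontr.tendsto 1).mono_left (nhdsWithin_le_nhds (s := Ioo (0:ℝ) 1))
    simpa using h1
  exact le_of_tendsto hlim (eventually_mem_nhdsWithin.mono (fun r hr => key r hr.1 hr.2))

end
end

section
/- Let 0 ≤ α < 1 and ρ > -1. Suppose φ(z) = z + Σ φ_n z^n satisfies |φ_n| ≤ n(1-α) + α for all n ≥ 2, and f(z) = z + Σ a_n z^n satisfies z² f'' + 2(1+ρ) z f' + ρ(1+ρ) f = (1+ρ)(2+ρ) φ on the unit disk. Then |a_n| ≤ [n(1-α) + α] · ((1+ρ)(2+ρ))/((n+ρ)(n+1+ρ)) for every n ≥ 2. -/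
open Complex Metric Filter FormalMultilinearSeries Topology

private lemma emem {z : ℂ} (hz : z ∈ ball (0 : ℂ) 1) : z ∈ Metric.eball (0 : ℂ) 1 := by
  rw [mem_ball_zero_iff] at hz
  rw [EMetric.mem_ball, edist_zero_right, enorm_eq_nnnorm]
  exact_mod_cast hz

private lemma memb {z : ℂ} (hz : z ∈ Metric.eball (0 : ℂ) 1) : z ∈ ball (0 : ℂ) 1 := by
  rw [EMetric.mem_ball, edist_zero_right, enorm_eq_nnnorm] at hz
  rw [mem_ball_zero_iff]
  exact_mod_cast hz

private lemma aux_hfpsb (g : ℂ → ℂ) (c : ℕ → ℂ)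
    (h : ∀ z ∈ ball (0 : ℂ) 1, HasSum (fun n : ℕ => c n * z ^ n) (g z)) :
    HasFPowerSeriesOnBall g (ofScalars ℂ c) 0 1 := by
  refine ⟨?_, one_pos, ?_⟩
  · apply ENNReal.le_of_forall_nnreal_lt
    intro r hr
    have hr1 : (r : ℝ) < 1 := by exact_mod_cast hr
    have hz : ((r : ℝ) : ℂ) ∈ ball (0 : ℂ) 1 := by
      rw [mem_ball_zero_iff, Complex.norm_real, Real.norm_eq_abs,
        _root_.abs_of_nonneg r.coe_nonneg]
      exact hr1
    have hs := (h _ hz).summable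
    have ht : Tendsto (fun n => ‖ofScalars ℂ c n‖ * (r : ℝ) ^ n) atTop (𝓝 0) := by
      have h0 := hs.tendsto_atTop_zero.norm
      rw [norm_zero] at h0
      refine h0.congr fun n => ?_
      rw [norm_mul, norm_pow, Complex.norm_real, Real.norm_eq_abs,
        _root_.abs_of_nonneg r.coe_nonneg, ofScalars_norm]
    exact (ofScalars ℂ c).le_radius_of_tendsto ht
  · intro y hy
    rw [zero_add]
    exact (h y (memb hy)).congr_fun fun n => by rw [ofScalars_apply_eq, smul_eq_mul]

private lemma aux_deriv (g : ℂ → ℂ) (c : ℕ → ℂ)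
    (h : HasFPowerSeriesOnBall g (ofScalars ℂ c) 0 1) :
    ∀ z ∈ ball (0 : ℂ) 1, HasSum (fun n : ℕ => (n : ℂ) * c n * z ^ n) (z * deriv g z) := by
  intro z hz
  have hs := (h.fderiv).hasSum (emem hz)
  have hs2 := (ContinuousLinearMap.apply ℂ ℂ z).hasSum hs
  rw [zero_add] at hs2
  simp only [ContinuousLinearMap.apply_apply] at hs2
  have hterm : ∀ n : ℕ,
      ((derivSeries (ofScalars ℂ c)) n fun _ => z) z = ((n + 1 : ℕ) : ℂ) * c (n + 1) * z ^ (n + 1) := by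
    intro n
    rw [derivSeries_apply_diag, ofScalars_apply_eq, nsmul_eq_mul, smul_eq_mul]
    push_cast
    ring
  have hval : (fderiv ℂ g z) z = z * deriv g z := by
    have h1 : (fderiv ℂ g z) z = (fderiv ℂ g z) (z • (1 : ℂ)) := by simp
    rw [h1, map_smul, smul_eq_mul]
    rfl
  have hs3 : HasSum (fun n : ℕ => (((n + 1 : ℕ) : ℂ)) * c (n + 1) * z ^ (n + 1))
      (z * deriv g z) := by
    rw [← hval]
    exact HasSum.congr_fun hs2 fun n => (hterm n).symm
  have h4 := (hasSum_nat_add_iff (f := fun n : ℕ => (n : ℂ) * c n * z ^ n) 1).mp hs3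
  simpa using h4

theorem stmt_15 (α ρ : ℝ) (hα : 0 ≤ α) (hα1 : α < 1) (hρ : -1 < ρ)
    (φ f : ℂ → ℂ) (φn a : ℕ → ℂ)
    (hφs : ∀ z ∈ ball (0 : ℂ) 1, HasSum (fun n : ℕ => φn n * z ^ n) (φ z))
    (hφ0 : φn 0 = 0) (hφ1 : φn 1 = 1)
    (hφb : ∀ n : ℕ, 2 ≤ n → ‖φn n‖ ≤ n * (1 - α) + α)
    (hfs : ∀ z ∈ ball (0 : ℂ) 1, HasSum (fun n : ℕ => a n * z ^ n) (f z))
    (ha0 : a 0 = 0) (ha1 : a 1 = 1)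
    (hode : ∀ z ∈ ball (0 : ℂ) 1,
      z ^ 2 * deriv (deriv f) z + 2 * (1 + (ρ : ℂ)) * z * deriv f z + (ρ : ℂ) * (1 + ρ) * f z =
        (1 + (ρ : ℂ)) * (2 + ρ) * φ z) :
    ∀ n : ℕ, 2 ≤ n → ‖a n‖ ≤
      ((n : ℝ) * (1 - α) + α) * ((1 + ρ) * (2 + ρ)) / (((n : ℝ) + ρ) * ((n : ℝ) + 1 + ρ)) := by
  have hf : HasFPowerSeriesOnBall f (ofScalars ℂ a) 0 1 := aux_hfpsb f a hfs
  have h1 := aux_deriv f a hf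
  have hg : HasFPowerSeriesOnBall (fun z => z * deriv f z)
      (ofScalars ℂ (fun n : ℕ => (n : ℂ) * a n)) 0 1 := aux_hfpsb _ _ h1
  have h2 := aux_deriv _ _ hg
  have hfd : AnalyticOnNhd ℂ (deriv f) (EMetric.ball (0 : ℂ) 1) :=
    (hf.analyticOnNhd).deriv
  have key : ∀ z ∈ ball (0 : ℂ) 1,
      HasSum (fun m : ℕ => (((m : ℂ) + ρ) * ((m : ℂ) + 1 + ρ) * a m) * z ^ m)
        ((1 + (ρ : ℂ)) * (2 + ρ) * φ z) := by
    intro z hz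
    have hder : deriv (fun w : ℂ => w * deriv f w) z
        = deriv f z + z * deriv (deriv f) z := by
      have hd2 : DifferentiableAt ℂ (deriv f) z := (hfd z (emem hz)).differentiableAt
      rw [deriv_fun_mul differentiableAt_fun_id hd2]
      simp
    have hS1 := h1 z hz
    have hS2 := h2 z hz
    rw [hder] at hS2
    have hS0 := hfs z hz
    have htotal := (hS2.sub hS1).add ((hS1.mul_left (2 * (1 + (ρ : ℂ)))).add
      (hS0.mul_left ((ρ : ℂ) * (1 + ρ))))
    have hval : (z * (deriv f z + z * deriv (deriv f) z) - z * deriv f z) +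
        (2 * (1 + (ρ : ℂ)) * (z * deriv f z) + (ρ : ℂ) * (1 + ρ) * f z)
        = (1 + (ρ : ℂ)) * (2 + ρ) * φ z := by
      rw [← hode z hz]; ring
    rw [hval] at htotal
    have hterms : (fun m : ℕ => (((m : ℂ) + ρ) * ((m : ℂ) + 1 + ρ) * a m) * z ^ m)
        = fun m : ℕ => ((m : ℂ) * ((m : ℂ) * a m) * z ^ m - (m : ℂ) * a m * z ^ m) +
          (2 * (1 + (ρ : ℂ)) * ((m : ℂ) * a m * z ^ m) +
            (ρ : ℂ) * (1 + ρ) * (a m * z ^ m)) := funext fun m => by ring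
    rw [hterms]
    exact htotal
  have hR : ∀ z ∈ ball (0 : ℂ) 1,
      HasSum (fun m : ℕ => ((1 + (ρ : ℂ)) * (2 + ρ) * φn m) * z ^ m)
        ((1 + (ρ : ℂ)) * (2 + ρ) * φ z) := by
    intro z hz
    have h := (hφs z hz).mul_left ((1 + (ρ : ℂ)) * (2 + ρ))
    simpa [mul_assoc] using h
  have heq : (fun m : ℕ => ((m : ℂ) + ρ) * ((m : ℂ) + 1 + ρ) * a m)
      = fun m : ℕ => (1 + (ρ : ℂ)) * (2 + ρ) * φn m := by
    have hL := aux_hfpsb _ _ key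
    have hR' := aux_hfpsb _ _ hR
    exact ofScalars_series_injective ℂ ℂ
      (hL.hasFPowerSeriesAt.eq_formalMultilinearSeries hR'.hasFPowerSeriesAt)
  intro n hn
  have hid : ((n : ℂ) + ρ) * ((n : ℂ) + 1 + ρ) * a n = (1 + (ρ : ℂ)) * (2 + ρ) * φn n :=
    congrFun heq n
  have hn2 : (2 : ℝ) ≤ (n : ℝ) := by exact_mod_cast hn
  have hA : (0 : ℝ) < (n : ℝ) + ρ := by linarith
  have hB : (0 : ℝ) < (n : ℝ) + 1 + ρ := by linarith
  have hC1 : (0 : ℝ) < 1 + ρ := by linarith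
  have hC2 : (0 : ℝ) < 2 + ρ := by linarith
  have han : a n = ((1 + (ρ : ℂ)) * (2 + ρ) * φn n) / (((n : ℂ) + ρ) * ((n : ℂ) + 1 + ρ)) := by
    have hne : (((n : ℂ) + ρ) * ((n : ℂ) + 1 + ρ)) ≠ 0 := by
      have e1 : ((n : ℂ) + ρ) = (((n : ℝ) + ρ : ℝ) : ℂ) := by push_cast; ring
      have e2 : ((n : ℂ) + 1 + ρ) = (((n : ℝ) + 1 + ρ : ℝ) : ℂ) := by push_cast; ring
      rw [e1, e2]
      simp only [ne_eq, mul_eq_zero, Complex.ofReal_eq_zero]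
      push_neg
      exact ⟨hA.ne', hB.ne'⟩
    rw [eq_div_iff hne]
    linear_combination hid
  have habs : ‖a n‖
      = ((1 + ρ) * (2 + ρ) * ‖φn n‖) / (((n : ℝ) + ρ) * ((n : ℝ) + 1 + ρ)) := by
    have e1 : ((n : ℂ) + ρ) = (((n : ℝ) + ρ : ℝ) : ℂ) := by push_cast; ring
    have e2 : ((n : ℂ) + 1 + ρ) = (((n : ℝ) + 1 + ρ : ℝ) : ℂ) := by push_cast; ring
    have e3 : (1 + (ρ : ℂ)) = (((1 + ρ : ℝ)) : ℂ) := by push_cast; ring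
    have e4 : ((2 : ℂ) + ρ) = (((2 + ρ : ℝ)) : ℂ) := by push_cast; ring
    rw [han, e1, e2, e3, e4, norm_div, norm_mul, norm_mul, norm_mul,
      Complex.norm_real, Complex.norm_real, Complex.norm_real, Complex.norm_real,
      Real.norm_eq_abs, Real.norm_eq_abs, Real.norm_eq_abs, Real.norm_eq_abs,
      _root_.abs_of_pos hA, _root_.abs_of_pos hB, _root_.abs_of_pos hC1, _root_.abs_of_pos hC2]
  rw [habs]
  have hb := hφb n hn
  rw [div_le_div_iff₀ (by positivity) (by positivity)]
  have hnum : (1 + ρ) * (2 + ρ) * ‖φn n‖ ≤ (1 + ρ) * (2 + ρ) * ((n : ℝ) * (1 - α) + α) := by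
    have := mul_le_mul_of_nonneg_left hb (le_of_lt (by positivity : (0:ℝ) < (1 + ρ) * (2 + ρ)))
    exact this
  nlinarith [mul_pos hA hB, norm_nonneg (φn n)]
end
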